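/- arXiv:0909.4342 — 5 statements merged into one kernel-verified Lean document; each statement's English description precedes it below -/
import Mathlib

section
/- For each path order of a lattice path matroid M, there is exactly one interval presentation of M (i.e., the antichain of intervals presenting M with respect to that linear order is unique). -/
open Matroid Set

namespace Matroid

variable {α : Type*}

/-- Deletion of a set of elements from a matroid. -/
def del (M : Matroid α) (D : Set α) : Matroid α := M ↾ (M.E \ D)

/-- Contraction of a set of elements, defined via duality: `M ／ C = (M✶ ＼ C)✶`. -/
def con (M : Matroid α) (C : Set α) : Matroid α := (M✶.del C)✶

/-- `N` is a minor of `M` if `N` arises from `M` by a contraction followed by a deletion. -/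
def IsMinorOf (N M : Matroid α) : Prop :=
  ∃ C D : Set α, Disjoint C D ∧ N = (M.con C).del D

/-- A circuit is a minimal dependent set. -/
def IsCircuit' (M : Matroid α) (C : Set α) : Prop :=
  M.Dep C ∧ ∀ D, M.Dep D → D ⊆ C → D = C

/-- A spanning circuit is a circuit whose closure is the ground set. -/
def IsSpanningCircuit (M : Matroid α) (C : Set α) : Prop :=
  M.IsCircuit' C ∧ M.Spanning C

/-- Two elements of a matroid are connected if they are equal or lie on a common circuit. -/
def ConnTo (M : Matroid α) (x y : α) : Prop :=
  (x = y ∧ x ∈ M.E) ∨ ∃ C, M.IsCircuit' C ∧ x ∈ C ∧ y ∈ C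

/-- A matroid is connected if its ground set is nonempty and every two elements of the
ground set are connected. -/
def IsConnected (M : Matroid α) : Prop :=
  M.E.Nonempty ∧ ∀ ⦃x y : α⦄, x ∈ M.E → y ∈ M.E → M.ConnTo x y

/-- A loop: an element whose singleton is dependent. -/
def IsLoop' (M : Matroid α) (x : α) : Prop := x ∈ M.E ∧ ¬ M.Indep {x}

/-- The rank of a set `X` in a matroid: the maximum cardinality of an independent
subset of `X` (for finite matroids). -/
noncomputable def rkOf (M : Matroid α) (X : Set α) : ℕ :=
  sSup {k | ∃ I ⊆ X, M.Indep I ∧ I.ncard = k}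

/-- The nullity of a set `X`: `η(X) = |X| − r(X)`. -/
noncomputable def etaOf (M : Matroid α) (X : Set α) : ℕ := X.ncard - M.rkOf X

/-- A flat is connected if the corresponding restriction is a connected matroid. -/
def ConnectedFlat (M : Matroid α) (F : Set α) : Prop :=
  M.IsFlat F ∧ (M ↾ F).IsConnected

/-- A pnc-flat: a proper nontrivial (i.e. dependent) connected flat. -/
def PncFlat (M : Matroid α) (F : Set α) : Prop :=
  M.IsFlat F ∧ F ⊂ M.E ∧ M.Dep F ∧ (M ↾ F).IsConnected

/-- A fundamental flat: a pnc-flat `F` such that `F ∩ C` is a basis of `F`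
for some spanning circuit `C` of the matroid. -/
def FundFlat (M : Matroid α) (F : Set α) : Prop :=
  M.PncFlat F ∧ ∃ C, M.IsSpanningCircuit C ∧ M.IsBasis (F ∩ C) F

end Matroid

/-- `X` is a partial transversal of the family `J`. -/
def IsPartialTransversal {α : Type*} {r : ℕ} (J : Fin r → Set α) (X : Set α) : Prop :=
  ∃ f : α → Fin r, Set.InjOn f X ∧ ∀ x ∈ X, x ∈ J (f x)

/-- The family `J` is a presentation of the transversal matroid `M`: a set `X ⊆ E(M)` is
independent in `M` iff it is a partial transversal of `J`. -/
def IsPresentationOf {α : Type*} {r : ℕ} (J : Fin r → Set α) (M : Matroid α) : Prop :=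
  (∀ i, J i ⊆ M.E) ∧ ∀ X ⊆ M.E, (M.Indep X ↔ IsPartialTransversal J X)

/-- An interval presentation of `M` with respect to a path order: `e` enumerates the ground
set in the path order, and the presentation consists of the intervals `[a i, b i]`, where
the `a i` are strictly increasing, the `b i` are strictly increasing and `a i ≤ b i`. -/
structure IntervalPres {α : Type*} (M : Matroid α) (n r : ℕ) where
  e : Fin n → α
  inj : Function.Injective e
  ground : Set.range e = M.E
  a : Fin r → Fin n
  b : Fin r → Fin n
  ha : StrictMono a
  hb : StrictMono b
  hab : ∀ i, a i ≤ b i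
  pres : IsPresentationOf (fun i => e '' Set.Icc (a i) (b i)) M

/-- The `i`-th interval of an interval presentation. -/
def IntervalPres.J {α : Type*} {M : Matroid α} {n r : ℕ}
    (P : IntervalPres M n r) (i : Fin r) : Set α :=
  P.e '' Set.Icc (P.a i) (P.b i)

/-- A lattice path matroid: a matroid admitting an interval presentation. -/
def IsLPM {α : Type*} (M : Matroid α) : Prop :=
  ∃ n r : ℕ, Nonempty (IntervalPres M n r)

/-- A terminal element: one that is least or greatest in some path order. -/
def IsTerminal {α : Type*} (M : Matroid α) (x : α) : Prop :=
  ∃ (n r : ℕ) (P : IntervalPres M n r) (i : Fin n),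
    P.e i = x ∧ (i.1 = 0 ∨ i.1 = n - 1)

/-- A nested matroid: a lattice path matroid with an interval presentation in which the set
of lower endpoints, or the set of upper endpoints, is an interval in the path order. -/
def IsNested {α : Type*} (M : Matroid α) : Prop :=
  ∃ (n r : ℕ) (P : IntervalPres M n r),
    (Set.range P.a).OrdConnected ∨ (Set.range P.b).OrdConnected

/-- `M` is (isomorphic to) the uniform matroid `U_{r,k}`: `k` elements, and the independent
sets are exactly the subsets of the ground set with at most `r` elements. -/
def IsUniformOf {α : Type*} (M : Matroid α) (r k : ℕ) : Prop :=
  M.E.Finite ∧ M.E.ncard = k ∧ ∀ I ⊆ M.E, (M.Indep I ↔ I.ncard ≤ r)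

/-- `M` is (isomorphic to) an `n`-element circuit `U_{n-1,n}`. -/
def IsCircuitMatroidOf {α : Type*} (M : Matroid α) (n : ℕ) : Prop :=
  IsUniformOf M (n - 1) n

/-- `N` is the truncation of `M` to rank `k`. -/
def IsTruncationOf {α : Type*} (N M : Matroid α) (k : ℕ) : Prop :=
  N.E = M.E ∧ ∀ I, N.Indep I ↔ (M.Indep I ∧ I.ncard ≤ k)

/-- `N` is the direct sum of `M₁` and `M₂`. -/
def IsDirectSumOf {α : Type*} (N M₁ M₂ : Matroid α) : Prop :=
  Disjoint M₁.E M₂.E ∧ N.E = M₁.E ∪ M₂.E ∧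
    ∀ I, N.Indep I ↔ (I ⊆ N.E ∧ M₁.Indep (I ∩ M₁.E) ∧ M₂.Indep (I ∩ M₂.E))

/-- `N` is the parallel connection `P_x(M₁, M₂)`, described by its bases. -/
def IsParallelConnOf {α : Type*} (N M₁ M₂ : Matroid α) (x : α) : Prop :=
  M₁.E ∩ M₂.E = {x} ∧ ¬ (M₁.IsLoop' x ∧ M₂.IsLoop' x) ∧ N.E = M₁.E ∪ M₂.E ∧
    ∀ B, N.IsBase B ↔
      ((x ∈ B ∧ M₁.IsBase (B ∩ M₁.E) ∧ M₂.IsBase (B ∩ M₂.E)) ∨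
       (x ∉ B ∧ ((M₁.IsBase (B ∩ M₁.E) ∧ M₂.IsBase ((B ∩ M₂.E) ∪ {x})) ∨
                 (M₂.IsBase (B ∩ M₂.E) ∧ M₁.IsBase ((B ∩ M₁.E) ∪ {x})))))

/-- `N` is the free extension `M + x` of `M` by the element `x`. -/
def IsFreeExtOf {α : Type*} (N M : Matroid α) (x : α) : Prop :=
  x ∉ M.E ∧ N.E = insert x M.E ∧
    ∀ I, N.Indep I ↔ (I ⊆ N.E ∧ ((x ∉ I ∧ M.Indep I) ∨
        (x ∈ I ∧ M.Indep (I \ {x}) ∧ ¬ M.Spanning (I \ {x}))))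

/-- `M` is (isomorphic to) `P_m`, the truncation to rank `m` of the direct sum of two
`m`-element circuits. -/
def IsPMat {α : Type*} (M : Matroid α) (m : ℕ) : Prop :=
  ∃ U₁ U₂ S : Matroid α, IsCircuitMatroidOf U₁ m ∧ IsCircuitMatroidOf U₂ m ∧
    IsDirectSumOf S U₁ U₂ ∧ IsTruncationOf M S m

/-- `M` is (isomorphic to) `P'_n`, the truncation to rank `n` of the parallel connection,
at a common element, of two `n`-element circuits. -/
def IsP'Mat {α : Type*} (M : Matroid α) (n : ℕ) : Prop :=
  ∃ (U₁ U₂ S : Matroid α) (x : α), IsCircuitMatroidOf U₁ n ∧ IsCircuitMatroidOf U₂ n ∧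
    IsParallelConnOf S U₁ U₂ x ∧ IsTruncationOf M S n

/-- `M` is (isomorphic to) `A_n = P'_n + x`. -/
def IsAMat {α : Type*} (M : Matroid α) (n : ℕ) : Prop :=
  ∃ (N : Matroid α) (x : α), IsP'Mat N n ∧ IsFreeExtOf M N x

/-- `M` is (isomorphic to) `B_{n,k} = T_n(U_{n-1,n} ⊕ U_{n-1,n} ⊕ U_{k-1,k})`. -/
def IsBMat {α : Type*} (M : Matroid α) (n k : ℕ) : Prop :=
  ∃ U₁ U₂ U₃ S₁ S₂ : Matroid α, IsCircuitMatroidOf U₁ n ∧ IsCircuitMatroidOf U₂ n ∧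
    IsUniformOf U₃ (k - 1) k ∧ IsDirectSumOf S₁ U₁ U₂ ∧ IsDirectSumOf S₂ S₁ U₃ ∧
    IsTruncationOf M S₂ n

/-- `M` is (isomorphic to) `C_{n+k,k}`, the dual of `B_{n,k}`. -/
def IsCMat {α : Type*} (M : Matroid α) (n k : ℕ) : Prop := IsBMat M✶ n k

/-- `M` is (isomorphic to) `D_n = (P_{n-1} ⊕ U_{1,1}) + x`. -/
def IsDMat {α : Type*} (M : Matroid α) (n : ℕ) : Prop :=
  ∃ (P U S : Matroid α) (x : α), IsPMat P (n - 1) ∧ IsUniformOf U 1 1 ∧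
    IsDirectSumOf S P U ∧ IsFreeExtOf M S x

/-- `M` is (isomorphic to) `E_n`, the dual of `D_n`. -/
def IsEMat {α : Type*} (M : Matroid α) (n : ℕ) : Prop := IsDMat M✶ n

/-- `M` is (isomorphic to) the rank-3 wheel `W_3`, the cycle matroid of `K₄`: six elements,
rank 3, whose dependent 3-sets are the four triangles of `K₄`. -/
def IsWheel3 {α : Type*} (M : Matroid α) : Prop :=
  ∃ a b c d e f : α, ({a, b, c, d, e, f} : Set α).ncard = 6 ∧
    M.E = {a, b, c, d, e, f} ∧
    ∀ X ⊆ M.E, (M.Indep X ↔ X.ncard ≤ 3 ∧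
      X ≠ {a, b, f} ∧ X ≠ {a, c, e} ∧ X ≠ {b, c, d} ∧ X ≠ {d, e, f})

/-- `M` is (isomorphic to) the rank-3 whirl `W^3`, obtained from `W_3` by relaxing a
circuit-hyperplane: six elements, rank 3, with exactly three dependent 3-sets. -/
def IsWhirl3 {α : Type*} (M : Matroid α) : Prop :=
  ∃ a b c d e f : α, ({a, b, c, d, e, f} : Set α).ncard = 6 ∧
    M.E = {a, b, c, d, e, f} ∧
    ∀ X ⊆ M.E, (M.Indep X ↔ X.ncard ≤ 3 ∧
      X ≠ {a, b, f} ∧ X ≠ {a, c, e} ∧ X ≠ {b, c, d})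

/-- `M` is (isomorphic to) `R_4`: the parallel extension, at `x`, of the rank-4 matroid on
six elements whose ground set is the union of two 4-element circuits `{x,y,p,q}` and
`{x,y,u,v}` meeting in the independent set `{x,y}`, these circuits being its only
nonspanning circuits. -/
def IsR4Mat {α : Type*} (M : Matroid α) : Prop :=
  ∃ (S U : Matroid α) (x x' y p q u v : α),
    ({x, x', y, p, q, u, v} : Set α).ncard = 7 ∧
    S.E = {x, y, p, q, u, v} ∧
    (∀ X ⊆ S.E, (S.Indep X ↔ X.ncard ≤ 4 ∧
        ¬ ({x, y, p, q} : Set α) ⊆ X ∧ ¬ ({x, y, u, v} : Set α) ⊆ X)) ∧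
    U.E = {x, x'} ∧ (∀ B, U.IsBase B ↔ (B = {x} ∨ B = {x'})) ∧
    IsParallelConnOf M S U x

/-- `M` is (isomorphic to) `R_3`, the dual of `R_4`. -/
def IsR3Mat {α : Type*} (M : Matroid α) : Prop := IsR4Mat M✶

/-- `M` is isomorphic to a matroid in the list `E` of excluded minors of `L`. -/
def InExcludedList {α : Type*} (M : Matroid α) : Prop :=
  (∃ n, 3 ≤ n ∧ IsAMat M n) ∨
  (∃ n k, 2 ≤ k ∧ k ≤ n ∧ (IsBMat M n k ∨ IsCMat M n k)) ∨
  (∃ n, 4 ≤ n ∧ (IsDMat M n ∨ IsEMat M n)) ∨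
  IsWheel3 M ∨ IsWhirl3 M ∨ IsR3Mat M ∨ IsR4Mat M

/-- `M` is an excluded minor of the class `L` of lattice path matroids. -/
def IsExcludedMinorOfLPM {α : Type*} (M : Matroid α) : Prop :=
  M.Finite ∧ ¬ IsLPM M ∧ ∀ N : Matroid α, N.IsMinorOf M → N ≠ M → IsLPM N

section Statements

variable {α : Type*}


section Aux

variable {α : Type*} {M : Matroid α} {n r r₁ r₂ : ℕ}

lemma IntervalPres.indep_image (P : IntervalPres M n r) (g : Fin r → Fin n)
    (hg : ∀ i, g i ∈ Set.Icc (P.a i) (P.b i)) (S : Set (Fin r)) :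
    M.Indep (P.e '' (g '' S)) := by
  classical
  rcases S.eq_empty_or_nonempty with rfl | ⟨i0, hi0⟩
  · simpa using M.empty_indep
  have hsub : P.e '' (g '' S) ⊆ M.E := by
    rw [← P.ground]; exact Set.image_subset_range _ _
  rw [P.pres.2 _ hsub]
  have : Nonempty (Fin r) := ⟨i0⟩
  set f : α → Fin r :=
    fun x => if h : ∃ i ∈ S, P.e (g i) = x then h.choose else Classical.arbitrary _ with hf
  have key : ∀ x ∈ P.e '' (g '' S), P.e (g (f x)) = x := by
    intro x hx
    have hx' : ∃ i ∈ S, P.e (g i) = x := by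
      obtain ⟨y, ⟨i, hi, rfl⟩, rfl⟩ := hx
      exact ⟨i, hi, rfl⟩
    simp only [hf, dif_pos hx']
    exact hx'.choose_spec.2
  refine ⟨f, ?_, ?_⟩
  · intro x hx y hy hxy
    rw [← key x hx, ← key y hy, hxy]
  · intro x hx
    exact ⟨g (f x), hg (f x), key x hx⟩

lemma IntervalPres.ncard_le_prefix (P : IntervalPres M n r) {X : Set α} (hX : M.Indep X)
    (k : ℕ) (hXk : X ⊆ P.e '' {j : Fin n | j.1 < k}) :
    X.ncard ≤ {i : Fin r | (P.a i).1 < k}.ncard := by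
  obtain ⟨f, hfinj, hfmem⟩ := (P.pres.2 X hX.subset_ground).1 hX
  have hmap : ∀ x ∈ X, (P.a (f x)).1 < k := by
    intro x hx
    obtain ⟨j, hj, hje⟩ := hfmem x hx
    obtain ⟨j', hj', hje'⟩ := hXk hx
    obtain rfl : j = j' := P.inj (hje.trans hje'.symm)
    exact lt_of_le_of_lt (Fin.le_def.mp hj.1) hj'
  calc X.ncard = (f '' X).ncard := (Set.ncard_image_of_injOn hfinj).symm
    _ ≤ _ := Set.ncard_le_ncard (by rintro _ ⟨x, hx, rfl⟩; exact hmap x hx) (Set.toFinite _)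

lemma IntervalPres.ncard_le_suffix (P : IntervalPres M n r) {X : Set α} (hX : M.Indep X)
    (k : ℕ) (hXk : X ⊆ P.e '' {j : Fin n | k ≤ j.1}) :
    X.ncard ≤ {i : Fin r | k ≤ (P.b i).1}.ncard := by
  obtain ⟨f, hfinj, hfmem⟩ := (P.pres.2 X hX.subset_ground).1 hX
  have hmap : ∀ x ∈ X, k ≤ (P.b (f x)).1 := by
    intro x hx
    obtain ⟨j, hj, hje⟩ := hfmem x hx
    obtain ⟨j', hj', hje'⟩ := hXk hx
    obtain rfl : j = j' := P.inj (hje.trans hje'.symm)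
    exact le_trans hj' (Fin.le_def.mp hj.2)
  calc X.ncard = (f '' X).ncard := (Set.ncard_image_of_injOn hfinj).symm
    _ ≤ _ := Set.ncard_le_ncard (by rintro _ ⟨x, hx, rfl⟩; exact hmap x hx) (Set.toFinite _)

lemma count_a_le (P : IntervalPres M n r₁) (Q : IntervalPres M n r₂) (he : P.e = Q.e) (k : ℕ) :
    {i : Fin r₁ | (P.a i).1 < k}.ncard ≤ {i : Fin r₂ | (Q.a i).1 < k}.ncard := by
  have hind := P.indep_image P.a (fun i => ⟨le_refl _, P.hab i⟩) {i | (P.a i).1 < k}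
  have hsub : P.e '' (P.a '' {i | (P.a i).1 < k}) ⊆ Q.e '' {j : Fin n | j.1 < k} := by
    rw [← he]
    rintro _ ⟨_, ⟨i, hi, rfl⟩, rfl⟩
    exact ⟨P.a i, hi, rfl⟩
  have hle := Q.ncard_le_prefix hind k hsub
  have hcard : (P.e '' (P.a '' {i : Fin r₁ | (P.a i).1 < k})).ncard
      = {i : Fin r₁ | (P.a i).1 < k}.ncard := by
    rw [← Set.image_comp, Set.ncard_image_of_injective _ (P.inj.comp P.ha.injective)]
  rwa [hcard] at hle

lemma count_b_le (P : IntervalPres M n r₁) (Q : IntervalPres M n r₂) (he : P.e = Q.e) (k : ℕ) :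
    {i : Fin r₁ | k ≤ (P.b i).1}.ncard ≤ {i : Fin r₂ | k ≤ (Q.b i).1}.ncard := by
  have hind := P.indep_image P.b (fun i => ⟨P.hab i, le_refl _⟩) {i | k ≤ (P.b i).1}
  have hsub : P.e '' (P.b '' {i | k ≤ (P.b i).1}) ⊆ Q.e '' {j : Fin n | k ≤ j.1} := by
    rw [← he]
    rintro _ ⟨_, ⟨i, hi, rfl⟩, rfl⟩
    exact ⟨P.b i, hi, rfl⟩
  have hle := Q.ncard_le_suffix hind k hsub
  have hcard : (P.e '' (P.b '' {i : Fin r₁ | k ≤ (P.b i).1})).ncard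
      = {i : Fin r₁ | k ≤ (P.b i).1}.ncard := by
    rw [← Set.image_comp, Set.ncard_image_of_injective _ (P.inj.comp P.hb.injective)]
  rwa [hcard] at hle

lemma strictMono_lt_count_iff {a : Fin r → Fin n} (ha : StrictMono a) (i : Fin r) (k : ℕ) :
    (a i).1 < k ↔ i.1 < {j : Fin r | (a j).1 < k}.ncard := by
  have hIio : ∀ m : Fin r, {j : Fin r | j < m}.ncard = m.1 := by
    intro m
    have h : {j : Fin r | j < m} = ↑(Finset.Iio m) := by ext j; simp
    rw [h, Set.ncard_coe_finset, Fin.card_Iio]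
  have hIic : ∀ m : Fin r, {j : Fin r | j ≤ m}.ncard = m.1 + 1 := by
    intro m
    have h : {j : Fin r | j ≤ m} = ↑(Finset.Iic m) := by ext j; simp
    rw [h, Set.ncard_coe_finset, Fin.card_Iic]
  constructor
  · intro h
    have hsub : {j : Fin r | j ≤ i} ⊆ {j | (a j).1 < k} := by
      intro j hj
      exact lt_of_le_of_lt (Fin.le_def.mp (ha.monotone hj)) h
    have hc := Set.ncard_le_ncard hsub (Set.toFinite _)
    rw [hIic] at hc; omega
  · intro h
    by_contra hc
    push_neg at hc
    have hsub : {j : Fin r | (a j).1 < k} ⊆ {j | j < i} := by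
      intro j hj
      by_contra hji
      simp only [Set.mem_setOf_eq, not_lt] at hji
      exact absurd (lt_of_lt_of_le hj (hc.trans (Fin.le_def.mp (ha.monotone hji))))
        (lt_irrefl _)
    have hc2 := Set.ncard_le_ncard hsub (Set.toFinite _)
    rw [hIio] at hc2; omega

end Aux

theorem uniqueness_of_interval_presentation
    (M : Matroid α) (hM : IsLPM M) (n r₁ r₂ : ℕ)
    (P : IntervalPres M n r₁) (Q : IntervalPres M n r₂) (he : P.e = Q.e) :
    ∃ h : r₁ = r₂, ∀ i : Fin r₁,
      Q.a (Fin.cast h i) = P.a i ∧ Q.b (Fin.cast h i) = P.b i := by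
  clear hM
  have hca : ∀ k, {i : Fin r₁ | (P.a i).1 < k}.ncard = {i : Fin r₂ | (Q.a i).1 < k}.ncard :=
    fun k => le_antisymm (count_a_le P Q he k) (count_a_le Q P he.symm k)
  have hcb : ∀ k, {i : Fin r₁ | k ≤ (P.b i).1}.ncard = {i : Fin r₂ | k ≤ (Q.b i).1}.ncard :=
    fun k => le_antisymm (count_b_le P Q he k) (count_b_le Q P he.symm k)
  have hr : r₁ = r₂ := by
    have h := hca n
    have h1 : {i : Fin r₁ | (P.a i).1 < n} = Set.univ := by
      ext i; simp [(P.a i).2]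
    have h2 : {i : Fin r₂ | (Q.a i).1 < n} = Set.univ := by
      ext i; simp [(Q.a i).2]
    rw [h1, h2, Set.ncard_univ, Set.ncard_univ] at h
    simpa using h
  subst hr
  have hcb' : ∀ k, {j : Fin r₁ | (P.b j).1 < k}.ncard = {j : Fin r₁ | (Q.b j).1 < k}.ncard := by
    intro k
    have h1 : {j : Fin r₁ | (P.b j).1 < k} = {j : Fin r₁ | k ≤ (P.b j).1}ᶜ := by
      ext j; simp [not_le]
    have h2 : {j : Fin r₁ | (Q.b j).1 < k} = {j : Fin r₁ | k ≤ (Q.b j).1}ᶜ := by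
      ext j; simp [not_le]
    have e1 := Set.ncard_add_ncard_compl {j : Fin r₁ | k ≤ (P.b j).1}
    have e2 := Set.ncard_add_ncard_compl {j : Fin r₁ | k ≤ (Q.b j).1}
    have e3 := hcb k
    rw [h1, h2]
    omega
  refine ⟨rfl, fun i => ?_⟩
  show Q.a i = P.a i ∧ Q.b i = P.b i
  constructor
  · have hiff : ∀ k, (P.a i).1 < k ↔ (Q.a i).1 < k := fun k => by
      rw [strictMono_lt_count_iff P.ha i k, strictMono_lt_count_iff Q.ha i k, hca k]
    have h1 := hiff ((P.a i).1 + 1)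
    have h2 := hiff ((Q.a i).1 + 1)
    exact (Fin.ext (by omega)).symm
  · have hiff : ∀ k, (P.b i).1 < k ↔ (Q.b i).1 < k := fun k => by
      rw [strictMono_lt_count_iff P.hb i k, strictMono_lt_count_iff Q.hb i k, hcb' k]
    have h1 := hiff ((P.b i).1 + 1)
    have h2 := hiff ((Q.b i).1 + 1)
    exact (Fin.ext (by omega)).symm


end Statements
end

section
/- Let F be a flat of a matroid M and let x ∈ E(M) − F. Then the restriction of M/x to F equals the restriction of M to F. Consequently, if in addition F is a connected flat of M and cl_M({x}) = {x}, then cl_{M/x}(F) is a connected flat of M/x. -/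
open Matroid Set

namespace Matroid

variable {α : Type*}

lemma IsCircuit'.dep {M : Matroid α} {C : Set α} (h : M.IsCircuit' C) : M.Dep C := h.1
lemma IsCircuit'.subset_ground {M : Matroid α} {C : Set α} (h : M.IsCircuit' C) : C ⊆ M.E :=
  h.1.subset_ground
lemma IsCircuit'.diff_singleton_indep {M : Matroid α} {C : Set α} (h : M.IsCircuit' C) {e : α}
    (he : e ∈ C) : M.Indep (C \ {e}) := by
  by_contra hi
  have hd : M.Dep (C \ {e}) := ⟨hi, diff_subset.trans h.subset_ground⟩
  have := h.2 _ hd diff_subset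
  exact (this ▸ he).2 rfl
lemma exists_circuit_subset {M : Matroid α} {D : Set α} (hD : M.Dep D) (hfin : D.Finite) :
    ∃ C ⊆ D, M.IsCircuit' C := by
  obtain ⟨n, hn⟩ : ∃ n, D.ncard = n := ⟨_, rfl⟩
  induction n using Nat.strong_induction_on generalizing D with
  | _ n IH =>
    by_cases hmin : ∀ D', M.Dep D' → D' ⊆ D → D' = D
    · exact ⟨D, Subset.rfl, hD, hmin⟩
    · push_neg at hmin
      obtain ⟨D', hD', hD'D, hne⟩ := hmin
      have hss : D' ⊂ D := hD'D.ssubset_of_ne hne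
      obtain ⟨C, hCD', hC⟩ := IH (D'.ncard) (hn ▸ Set.ncard_lt_ncard hss hfin) hD'
        (hfin.subset hD'D) rfl
      exact ⟨C, hCD'.trans hD'D, hC⟩
lemma IsCircuit'.nonempty {M : Matroid α} {C : Set α} (h : M.IsCircuit' C) : C.Nonempty := by
  rcases C.eq_empty_or_nonempty with rfl | hne
  · exact absurd M.empty_indep h.1.1
  · exact hne

lemma IsCircuit'.not_subset {M : Matroid α} {C D : Set α} (hC : M.IsCircuit' C) (hD : M.IsCircuit' D)
    (hne : C ≠ D) : ¬ C ⊆ D := fun hss => hne (hD.2 _ hC.1 hss)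

/-- Weak circuit elimination. -/
lemma weak_elim {M : Matroid α} (hE : M.E.Finite) {C₁ C₂ : Set α} (hC₁ : M.IsCircuit' C₁)
    (hC₂ : M.IsCircuit' C₂) (hne : C₁ ≠ C₂) {e : α} (he : e ∈ C₁ ∩ C₂) :
    M.Dep ((C₁ ∪ C₂) \ {e}) := by
  have hUE : C₁ ∪ C₂ ⊆ M.E := union_subset hC₁.subset_ground hC₂.subset_ground
  have hU : (C₁ ∪ C₂).Finite := hE.subset hUE
  obtain ⟨f, hf⟩ : (C₁ \ C₂).Nonempty := by
    rw [diff_nonempty]; exact hC₁.not_subset hC₂ hne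
  have hI1 : M.Indep (C₁ \ {f}) := hC₁.diff_singleton_indep hf.1
  obtain ⟨B, hB, hBsub⟩ := hI1.subset_isBasis_of_subset
    (diff_subset.trans subset_union_left) hUE
  have hfB : f ∉ B := by
    intro hfB
    have : C₁ ⊆ B := by
      intro a ha
      rcases eq_or_ne a f with rfl | hab
      · exact hfB
      · exact hBsub ⟨ha, hab⟩
    exact hC₁.1.1 (hB.indep.subset this)
  obtain ⟨g, hgC₂, hgB⟩ : ∃ g ∈ C₂, g ∉ B := by
    by_contra h
    push_neg at h
    exact hC₂.1.1 (hB.indep.subset h)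
  have hgf : g ≠ f := fun h => hf.2 (h ▸ hgC₂)
  refine ⟨fun hind => ?_, diff_subset.trans hUE⟩
  obtain ⟨B', hB', hsub'⟩ := hind.subset_isBasis_of_subset diff_subset hUE
  have hcard : B.encard = B'.encard := hB.encard_eq_encard hB'
  have hBcard : B.ncard = B'.ncard := by
    simp only [Set.ncard_def, hcard]
  have h1 : (C₁ ∪ C₂).ncard - 1 ≤ B'.ncard := by
    have := Set.ncard_le_ncard hsub' (hU.subset hB'.subset)
    rwa [Set.ncard_diff_singleton_of_mem (show e ∈ C₁ ∪ C₂ from Or.inl he.1)]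
      at this
  have h2 : B.ncard ≤ (C₁ ∪ C₂).ncard - 2 := by
    have hsub2 : B ⊆ (C₁ ∪ C₂) \ {f, g} := by
      intro a ha
      refine ⟨hB.subset ha, ?_⟩
      rintro (rfl | rfl)
      · exact hfB ha
      · exact hgB ha
    have hle := Set.ncard_le_ncard hsub2 hU.diff
    have e1 : ((C₁ ∪ C₂) \ {f, g}) = ((C₁ ∪ C₂) \ {f}) \ {g} := by
      rw [Set.diff_diff, Set.singleton_union]
    have e2 : (((C₁ ∪ C₂) \ {f}) \ {g}).ncard = ((C₁ ∪ C₂) \ {f}).ncard - 1 :=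
      Set.ncard_diff_singleton_of_mem (show g ∈ (C₁ ∪ C₂) \ {f} from ⟨Or.inr hgC₂, hgf⟩)
    have e3 : ((C₁ ∪ C₂) \ {f}).ncard = (C₁ ∪ C₂).ncard - 1 :=
      Set.ncard_diff_singleton_of_mem (show f ∈ C₁ ∪ C₂ from Or.inl hf.1)
    have hcard2 : ((C₁ ∪ C₂) \ {f, g}).ncard = (C₁ ∪ C₂).ncard - 2 := by
      rw [e1, e2, e3]; omega
    omega
  have hge2 : 2 ≤ (C₁ ∪ C₂).ncard := by
    have : ({f, g} : Set α).ncard ≤ (C₁ ∪ C₂).ncard :=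
      Set.ncard_le_ncard (by rintro a (rfl | rfl); exacts [Or.inl hf.1, Or.inr hgC₂]) hU
    rwa [Set.ncard_pair hgf.symm] at this
  omega


/-- Strong circuit elimination. -/
lemma strong_elim {M : Matroid α} (hE : M.E.Finite) {C₁ C₂ : Set α} {e f : α}
    (hC₁ : M.IsCircuit' C₁) (hC₂ : M.IsCircuit' C₂) (he : e ∈ C₁ ∩ C₂) (hf : f ∈ C₁ \ C₂) :
    ∃ C, M.IsCircuit' C ∧ f ∈ C ∧ C ⊆ (C₁ ∪ C₂) \ {e} := by
  obtain ⟨n, hn⟩ : ∃ n, (C₁ ∪ C₂).ncard = n := ⟨_, rfl⟩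
  induction n using Nat.strong_induction_on generalizing C₁ C₂ e f with
  | _ n IH =>
    have hUE : C₁ ∪ C₂ ⊆ M.E := union_subset hC₁.subset_ground hC₂.subset_ground
    have hU : (C₁ ∪ C₂).Finite := hE.subset hUE
    have hne : C₁ ≠ C₂ := fun h => hf.2 (h ▸ hf.1)
    have hdep := weak_elim hE hC₁ hC₂ hne he
    obtain ⟨D, hDsub, hD⟩ := exists_circuit_subset hdep hU.diff
    by_cases hfD : f ∈ D
    · exact ⟨D, hD, hfD, hDsub⟩
    have heD : e ∉ D := fun h => (hDsub h).2 rfl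
    obtain ⟨g, hgD, hg⟩ : ∃ g ∈ D, g ∈ C₂ \ C₁ := by
      by_contra h
      push_neg at h
      have hDC₁ : D ⊆ C₁ := by
        intro a ha
        rcases (hDsub ha).1 with h1 | h2
        · exact h1
        · by_contra h1'
          exact (h a ha) ⟨h2, h1'⟩
      exact hfD ((hC₁.2 D hD.1 hDC₁).symm ▸ hf.1)
    have hge : g ≠ e := fun h => heD (h ▸ hgD)
    -- Step 1: eliminate g from (C₂, D), keeping e
    have hm1 : (C₂ ∪ D).ncard < n := by
      rw [← hn]
      refine Set.ncard_lt_ncard ⟨union_subset subset_union_right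
        (hDsub.trans diff_subset), fun hss => hf.2 ?_⟩ hU
      rcases hss (Or.inl hf.1) with h | h
      · exact h
      · exact absurd h hfD
    obtain ⟨C₄, hC₄, heC₄, hC₄sub⟩ := IH _ hm1 hC₂ hD ⟨hg.1, hgD⟩ ⟨he.2, heD⟩ rfl
    -- Step 2: eliminate e from (C₁, C₄), keeping f
    have hfC₄ : f ∉ C₄ := fun h => by
      rcases (hC₄sub h).1 with h' | h'
      · exact hf.2 h'
      · exact hfD h'
    have hgC₄ : g ∉ C₄ := fun h => (hC₄sub h).2 rfl
    have hC₄U : C₄ ⊆ C₁ ∪ C₂ := hC₄sub.trans (diff_subset.trans (union_subset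
      subset_union_right (hDsub.trans diff_subset)))
    have hm2 : (C₁ ∪ C₄).ncard < n := by
      rw [← hn]
      refine Set.ncard_lt_ncard ⟨union_subset subset_union_left hC₄U, fun hss => hg.2 ?_⟩ hU
      rcases hss (Or.inr hg.1) with h | h
      · exact h
      · exact absurd h hgC₄
    obtain ⟨C₅, hC₅, hfC₅, hC₅sub⟩ := IH _ hm2 hC₁ hC₄ ⟨he.1, heC₄⟩ ⟨hf.1, hfC₄⟩ rfl
    exact ⟨C₅, hC₅, hfC₅, hC₅sub.trans (diff_subset_diff_left
      (union_subset subset_union_left hC₄U))⟩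

/-- If `a` and `c` lie on intersecting circuits, some circuit contains both. -/
lemma exists_circuit_of_chain {M : Matroid α} (hE : M.E.Finite) {C₁ C₂ : Set α} {a c : α}
    (hC₁ : M.IsCircuit' C₁) (hC₂ : M.IsCircuit' C₂) (ha : a ∈ C₁) (hc : c ∈ C₂)
    (hint : (C₁ ∩ C₂).Nonempty) : ∃ C, M.IsCircuit' C ∧ a ∈ C ∧ c ∈ C := by
  obtain ⟨n, hn⟩ : ∃ n, (C₁ ∪ C₂).ncard = n := ⟨_, rfl⟩
  induction n using Nat.strong_induction_on generalizing C₁ C₂ with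
  | _ n IH =>
    have hUE : C₁ ∪ C₂ ⊆ M.E := union_subset hC₁.subset_ground hC₂.subset_ground
    have hU : (C₁ ∪ C₂).Finite := hE.subset hUE
    by_cases haC₂ : a ∈ C₂
    · exact ⟨C₂, hC₂, haC₂, hc⟩
    by_cases hcC₁ : c ∈ C₁
    · exact ⟨C₁, hC₁, ha, hcC₁⟩
    obtain ⟨e, he⟩ := hint
    obtain ⟨C₃, hC₃, haC₃, hC₃sub⟩ := strong_elim hE hC₁ hC₂ he ⟨ha, haC₂⟩
    by_cases hcC₃ : c ∈ C₃
    · exact ⟨C₃, hC₃, haC₃, hcC₃⟩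
    obtain ⟨C₄, hC₄, hcC₄, hC₄sub'⟩ := strong_elim hE hC₂ hC₁ ⟨he.2, he.1⟩ ⟨hc, hcC₁⟩
    have hC₄sub : C₄ ⊆ (C₁ ∪ C₂) \ {e} := hC₄sub'.trans (by rw [union_comm])
    by_cases haC₄ : a ∈ C₄
    · exact ⟨C₄, hC₄, haC₄, hcC₄⟩
    have heC₃ : e ∉ C₃ := fun h => (hC₃sub h).2 rfl
    have heC₄ : e ∉ C₄ := fun h => (hC₄sub h).2 rfl
    have hC₃U : C₃ ⊆ C₁ ∪ C₂ := hC₃sub.trans diff_subset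
    have hC₄U : C₄ ⊆ C₁ ∪ C₂ := hC₄sub.trans diff_subset
    -- C₃ is not contained in C₁
    have hnotsub : ¬ C₃ ⊆ C₁ := fun hss => heC₃ ((hC₁.2 _ hC₃.1 hss) ▸ he.1)
    obtain ⟨g, hgC₃, hgC₁⟩ : ∃ g ∈ C₃, g ∉ C₁ := by
      by_contra h; push_neg at h; exact hnotsub h
    have hg2 : g ∈ C₂ \ C₁ := ⟨(hC₃U hgC₃).resolve_left hgC₁, hgC₁⟩
    by_cases hlt1 : (C₃ ∪ C₂).ncard < n
    · exact IH _ hlt1 hC₃ hC₂ haC₃ hc ⟨g, hgC₃, hg2.1⟩ rfl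
    by_cases hlt2 : (C₁ ∪ C₄).ncard < n
    · have hint2 : (C₁ ∩ C₄).Nonempty := by
        by_contra h
        rw [Set.not_nonempty_iff_eq_empty] at h
        have : C₄ ⊆ C₂ := fun z hz => (hC₄U hz).resolve_left
          (fun hz1 => (Set.eq_empty_iff_forall_notMem.1 h z) ⟨hz1, hz⟩)
        exact heC₄ ((hC₂.2 _ hC₄.1 this) ▸ he.2)
      exact IH _ hlt2 hC₁ hC₄ ha hcC₄ hint2 rfl
    -- both unions are everything
    have heq2 : C₁ ∪ C₄ = C₁ ∪ C₂ := by
      refine Set.eq_of_subset_of_ncard_le (union_subset subset_union_left hC₄U) ?_ hU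
      omega
    have hgC₄ : g ∈ C₄ := by
      have : g ∈ C₁ ∪ C₄ := heq2.symm ▸ (Or.inr hg2.1 : g ∈ C₁ ∪ C₂)
      exact this.resolve_left hgC₁
    have hlt3 : (C₃ ∪ C₄).ncard < n := by
      rw [← hn]
      refine Set.ncard_lt_ncard ⟨union_subset hC₃U hC₄U, fun hss => ?_⟩ hU
      rcases hss (Or.inl he.1) with h | h
      · exact heC₃ h
      · exact heC₄ h
    exact IH _ hlt3 hC₃ hC₄ haC₃ hcC₄ ⟨g, hgC₃, hgC₄⟩ rfl

lemma ConnTo.symm {M : Matroid α} {x y : α} (h : M.ConnTo x y) : M.ConnTo y x := by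
  rcases h with ⟨rfl, h⟩ | ⟨C, hC, hx, hy⟩
  · exact Or.inl ⟨rfl, h⟩
  · exact Or.inr ⟨C, hC, hy, hx⟩

lemma ConnTo.trans {M : Matroid α} (hE : M.E.Finite) {x y z : α}
    (h1 : M.ConnTo x y) (h2 : M.ConnTo y z) : M.ConnTo x z := by
  rcases h1 with ⟨rfl, h⟩ | ⟨C₁, hC₁, hx, hy⟩
  · exact h2
  rcases h2 with ⟨rfl, h⟩ | ⟨C₂, hC₂, hy', hz⟩
  · exact Or.inr ⟨C₁, hC₁, hx, hy⟩
  obtain ⟨C, hC, hxC, hzC⟩ := exists_circuit_of_chain hE hC₁ hC₂ hx hz ⟨y, hy, hy'⟩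
  exact Or.inr ⟨C, hC, hxC, hzC⟩


lemma disjoint_insert_left' {a : α} {s t : Set α} :
    Disjoint (insert a s) t ↔ a ∉ t ∧ Disjoint s t := by
  rw [Set.insert_eq, Set.disjoint_union_left, Set.disjoint_singleton_left]

lemma con_ground {M : Matroid α} {x : α} : (M.con {x}).E = M.E \ {x} := rfl

lemma indep_iff_exists_dual_base {M : Matroid α} {I : Set α} :
    M.Indep I ↔ I ⊆ M.E ∧ ∃ B, M✶.IsBase B ∧ Disjoint I B := by
  conv_lhs => rw [← dual_dual M]
  exact dual_indep_iff_exists'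

lemma mem_dual_base_of_loop' {M : Matroid α} {x : α} (hx : x ∈ M.E) (hxl : ¬ M.Indep {x})
    {B : Set α} (hB : M✶.IsBase B) : x ∈ B := by
  by_contra hxB
  have : M.IsBase (M.E \ B) := (dual_isBase_iff (M := M) (show B ⊆ M.E from hB.subset_ground)).1 hB
  exact hxl (this.indep.subset (singleton_subset_iff.2 ⟨hx, hxB⟩))

/-- Independence in the contraction of a single non-loop element. -/
lemma con_indep_iff {M : Matroid α} {x : α} (hx : x ∈ M.E) (hxi : M.Indep {x}) {I : Set α} :
    (M.con {x}).Indep I ↔ x ∉ I ∧ M.Indep (insert x I) := by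
  have hdel : M✶.del {x} = M✶ ↾ (M.E \ {x}) := rfl
  have hdiffE : M.E \ {x} ⊆ M✶.E := diff_subset
  have hsp : M✶.Spanning (M.E \ {x}) := by
    obtain ⟨-, B₀, hB₀, hdisj⟩ := indep_iff_exists_dual_base.1 hxi
    have hB₀sub : B₀ ⊆ M.E \ {x} := fun b hb =>
      ⟨hB₀.subset_ground hb, fun hbx => hdisj.ne_of_mem rfl hb hbx.symm⟩
    exact hB₀.spanning.superset hB₀sub hdiffE
  have hbasis_iff : ∀ B : Set α, M✶.IsBasis B (M.E \ {x}) ↔ (M✶.IsBase B ∧ x ∉ B) := by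
    intro B
    constructor
    · intro hB
      refine ⟨hB.indep.isBase_of_spanning ?_, fun hxB => (hB.subset hxB).2 rfl⟩
      rw [spanning_iff_closure_eq hB.indep.subset_ground, hB.closure_eq_closure]
      exact hsp.closure_eq
    · rintro ⟨hB, hxB⟩
      exact hB.isBasis_of_subset hdiffE (fun b hb => ⟨hB.subset_ground hb,
        fun h => hxB (h ▸ hb)⟩)
  constructor
  · rintro ⟨hIsub, B, hBbase, hdisj⟩
    rw [hdel] at hBbase
    have hIsub' : I ⊆ M.E \ {x} := hIsub
    rw [isBase_restrict_iff hdiffE, hbasis_iff] at hBbase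
    have hxI : x ∉ I := fun h => (hIsub' h).2 rfl
    refine ⟨hxI, indep_iff_exists_dual_base.2 ⟨insert_subset hx (hIsub'.trans diff_subset),
      B, hBbase.1, ?_⟩⟩
    rw [disjoint_insert_left']
    exact ⟨hBbase.2, hdisj⟩
  · rintro ⟨hxI, hind⟩
    obtain ⟨hsub, B, hB, hdisj⟩ := indep_iff_exists_dual_base.1 hind
    rw [disjoint_insert_left'] at hdisj
    refine ⟨?_, B, (isBase_restrict_iff hdiffE).2 ((hbasis_iff B).2 ⟨hB, hdisj.1⟩), hdisj.2⟩
    exact fun a ha => ⟨hsub (Or.inr ha), fun h => hxI (h ▸ ha)⟩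

/-- Independence in the contraction of a single loop. -/
lemma con_loop_indep_iff {M : Matroid α} {x : α} (hx : x ∈ M.E) (hxl : ¬ M.Indep {x})
    {I : Set α} : (M.con {x}).Indep I ↔ x ∉ I ∧ M.Indep I := by
  have hdel : M✶.del {x} = M✶ ↾ (M.E \ {x}) := rfl
  have hdiffE : M.E \ {x} ⊆ M✶.E := diff_subset
  constructor
  · rintro ⟨hIsub, B, hBbase, hdisj⟩
    rw [hdel, isBase_restrict_iff hdiffE] at hBbase
    have hIsub' : I ⊆ M.E \ {x} := hIsub
    have hxI : x ∉ I := fun h => (hIsub' h).2 rfl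
    have hxB : x ∉ B := fun h => (hBbase.subset h).2 rfl
    have hind : M✶.Indep (insert x B) := by
      obtain ⟨hsub', B₀, hB₀, hdisj₀⟩ := (dual_indep_iff_exists' (M := M)).1 hBbase.indep
      refine dual_indep_iff_exists'.2 ⟨insert_subset hx hsub', B₀, hB₀, ?_⟩
      rw [disjoint_insert_left']
      exact ⟨fun hxB₀ => hxl (hB₀.indep.subset (singleton_subset_iff.2 hxB₀)), hdisj₀⟩
    have hbase : M✶.IsBase (insert x B) := by
      by_contra hnb
      obtain ⟨B', hB', hsubB'⟩ := hind.exists_isBase_superset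
      have hBB' : B ⊆ B' \ {x} := fun b hb => ⟨hsubB' (Or.inr hb), fun h => hxB (h ▸ hb)⟩
      have heq : B = B' \ {x} := hBbase.eq_of_subset_indep (hB'.indep.subset diff_subset) hBB'
        (fun b hb => ⟨hB'.subset_ground hb.1, hb.2⟩)
      have hB'eq : B' = insert x B := by
        rw [heq]
        ext b
        simp only [Set.mem_insert_iff, Set.mem_diff, Set.mem_singleton_iff]
        constructor
        · intro hb; by_cases hbx : b = x; · exact Or.inl hbx
          · exact Or.inr ⟨hb, hbx⟩
        · rintro (rfl | ⟨hb, -⟩); · exact hsubB' (Or.inl rfl)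
          · exact hb
      exact hnb (hB'eq ▸ hB')
    refine ⟨hxI, indep_iff_exists_dual_base.2 ⟨hIsub'.trans diff_subset, insert x B, hbase, ?_⟩⟩
    rw [disjoint_comm, disjoint_insert_left']
    exact ⟨hxI, hdisj.symm⟩
  · rintro ⟨hxI, hind⟩
    obtain ⟨hsub, B', hB', hdisj⟩ := indep_iff_exists_dual_base.1 hind
    have hxB' : x ∈ B' := mem_dual_base_of_loop' hx hxl hB'
    have hBind : M✶.Indep (B' \ {x}) := hB'.indep.subset diff_subset
    have hBbasis : M✶.IsBasis (B' \ {x}) (M.E \ {x}) := by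
      refine hBind.isBasis_of_maximal_subset (fun b hb => ⟨hB'.subset_ground hb.1, hb.2⟩)
        (fun J hJ hBJ hJsub => ?_) hdiffE
      have hxJ : x ∉ J := fun h => (hJsub h).2 rfl
      have hindJ : M✶.Indep (insert x J) := by
        obtain ⟨hsub', B₀, hB₀, hdisj₀⟩ := (dual_indep_iff_exists' (M := M)).1 hJ
        refine dual_indep_iff_exists'.2 ⟨insert_subset hx hsub', B₀, hB₀, ?_⟩
        rw [disjoint_insert_left']
        exact ⟨fun hxB₀ => hxl (hB₀.indep.subset (singleton_subset_iff.2 hxB₀)), hdisj₀⟩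
      have hB'sub : B' ⊆ insert x J := by
        intro b hb
        rcases eq_or_ne b x with rfl | hbx
        · exact Or.inl rfl
        · exact Or.inr (hBJ ⟨hb, hbx⟩)
      have := hB'.eq_of_subset_indep hindJ hB'sub
      intro j hj
      have hjB' : j ∈ B' := this ▸ (Or.inr hj : j ∈ insert x J)
      exact ⟨hjB', fun h => hxJ (h ▸ hj)⟩
    refine ⟨?_, B' \ {x}, (isBase_restrict_iff hdiffE).2 hBbasis,
      disjoint_of_subset_right diff_subset hdisj⟩
    exact fun a ha => ⟨hsub ha, fun h => hxI (h ▸ ha)⟩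



lemma flat_closure' (M : Matroid α) (X : Set α) : M.IsFlat (M.closure X) := by
  rw [closure_def]
  have hne : {F | M.IsFlat F ∧ X ∩ M.E ⊆ F}.Nonempty := ⟨M.E, M.ground_isFlat, inter_subset_right⟩
  haveI := hne.to_subtype
  rw [sInter_eq_iInter]
  exact IsFlat.iInter fun F => F.2.1

lemma circuit_restrict_iff {M : Matroid α} {X C : Set α} (hX : X ⊆ M.E) (hCX : C ⊆ X) :
    (M ↾ X).IsCircuit' C ↔ M.IsCircuit' C := by
  constructor
  · rintro ⟨hd, hmin⟩
    refine ⟨⟨(restrict_dep_iff.1 hd).1, hCX.trans hX⟩,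
      fun D hD hDC => hmin D (restrict_dep_iff.2 ⟨hD.1, hDC.trans hCX⟩) hDC⟩
  · rintro ⟨hd, hmin⟩
    refine ⟨restrict_dep_iff.2 ⟨hd.1, hCX⟩, fun D hD hDC => ?_⟩
    have h' := restrict_dep_iff.1 hD
    exact hmin D ⟨h'.1, (hDC.trans hCX).trans hX⟩ hDC

lemma fund_circuit' {M : Matroid α} {I : Set α} {y : α} (hI : M.Indep I) (hfin : I.Finite)
    (hy : y ∈ M.closure I) (hyI : y ∉ I) :
    ∃ C, M.IsCircuit' C ∧ y ∈ C ∧ C ⊆ insert y I := by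
  have hdep : M.Dep (insert y I) := hI.insert_dep_iff.2 ⟨hy, hyI⟩
  obtain ⟨C, hCsub, hC⟩ := exists_circuit_subset hdep (hfin.insert y)
  refine ⟨C, hC, ?_, hCsub⟩
  by_contra hyC
  have hCI : C ⊆ I := by
    intro a ha
    rcases hCsub ha with rfl | h
    · exact absurd ha hyC
    · exact h
  exact hC.1.1 (hI.subset hCI)

theorem con_restrict_flat_eq {M : Matroid α} {F : Set α} (hF : M.IsFlat F) {x : α}
    (hx : x ∈ M.E \ F) : (M.con {x}) ↾ F = M ↾ F := by
  refine ext_indep rfl (fun ⦃I⦄ hI => ?_)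
  have hIF : I ⊆ F := hI
  have hxF : x ∉ F := hx.2
  have hxI : x ∉ I := fun h => hxF (hIF h)
  simp only [restrict_indep_iff]
  by_cases hxi : M.Indep {x}
  · rw [con_indep_iff hx.1 hxi]
    constructor
    · rintro ⟨⟨-, hins⟩, hIF'⟩
      exact ⟨hins.subset (subset_insert _ _), hIF'⟩
    · rintro ⟨hind, hIF'⟩
      refine ⟨⟨hxI, ?_⟩, hIF'⟩
      rw [hind.insert_indep_iff_of_notMem hxI]
      exact ⟨hx.1, fun hcl => hxF (hF.closure ▸ (M.closure_subset_closure hIF) hcl)⟩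
  · rw [con_loop_indep_iff hx.1 hxi]
    tauto

end Matroid

section Statements

variable {α : Type*}

theorem contract_restrict_flat_eq
    (M : Matroid α) (hfin : M.Finite) (F : Set α) (hF : M.IsFlat F)
    (x : α) (hx : x ∈ M.E \ F) :
    (M.con {x}) ↾ F = M ↾ F ∧
      (M.ConnectedFlat F → M.closure {x} = {x} →
        (M.con {x}).ConnectedFlat ((M.con {x}).closure F)) := by
  have hxE : x ∈ M.E := hx.1
  have hxF : x ∉ F := hx.2
  have hFE : F ⊆ M.E := hF.subset_ground
  refine ⟨con_restrict_flat_eq hF hx, fun hconn hclx => ?_⟩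
  have hNF : (M.con {x}) ↾ F = M ↾ F := con_restrict_flat_eq hF hx
  -- x is not a loop
  have hxi : M.Indep {x} := by
    by_contra h
    have hxcl : x ∈ M.closure ∅ := by
      refine (M.empty_indep.mem_closure_iff').2 ⟨hxE, fun hi => absurd ?_ h⟩
      simpa using hi
    exact hxF (hF.closure ▸ (M.closure_subset_closure (empty_subset F)) hxcl)
  have hNchar : ∀ I : Set α, (M.con {x}).Indep I ↔ x ∉ I ∧ M.Indep (insert x I) :=
    fun I => con_indep_iff hxE hxi
  have hFN : F ⊆ (M.con {x}).E := fun a ha => ⟨hFE ha, fun h => hxF (h ▸ ha)⟩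
  have hNloopless : ∀ y ∈ (M.con {x}).E, (M.con {x}).Indep {y} := by
    intro y hy
    have hyx : y ∉ ({x} : Set α) := hy.2
    rw [hNchar]
    refine ⟨fun h => hy.2 (by simpa using h.symm), ?_⟩
    have hyind : M.Indep (insert y {x}) :=
      (hxi.insert_indep_iff_of_notMem hyx).2 ⟨hy.1, by rw [hclx]; exact hy.2⟩
    rwa [show (insert y ({x} : Set α)) = insert x {y} from Set.pair_comm y x] at hyind
  have hFconn : (M ↾ F).IsConnected := hconn.2
  have hFne : F.Nonempty := hFconn.1
  set F' := (M.con {x}).closure F with hF'def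
  have hFF' : F ⊆ F' := (M.con {x}).subset_closure F hFN
  have hF'E : F' ⊆ (M.con {x}).E := (M.con {x}).closure_subset_ground F
  have hF'fin : F'.Finite :=
    hfin.ground_finite.subset ((hF'E.trans (diff_subset : M.E \ {x} ⊆ M.E)))
  have hRfin : ((M.con {x}) ↾ F').E.Finite := hF'fin
  -- transfer of circuits of the restriction to `F` into the restriction to `F'`
  have hcircF : ∀ C ⊆ F, (M ↾ F).IsCircuit' C → ((M.con {x}) ↾ F').IsCircuit' C := by
    intro C hCF hC
    rw [← hNF] at hC
    exact (circuit_restrict_iff hF'E (hCF.trans hFF')).2 ((circuit_restrict_iff hFN hCF).1 hC)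
  have claim1 : ∀ y ∈ F, ∀ z ∈ F, ((M.con {x}) ↾ F').ConnTo y z := by
    intro y hy z hz
    rcases hFconn.2 (show y ∈ (M ↾ F).E from hy) (show z ∈ (M ↾ F).E from hz) with
      ⟨rfl, -⟩ | ⟨C, hC, hyC, hzC⟩
    · exact Or.inl ⟨rfl, hFF' hy⟩
    · have hCF : C ⊆ F := hC.subset_ground
      exact Or.inr ⟨C, hcircF C hCF hC, hyC, hzC⟩
  have claim2 : ∀ y ∈ F', y ∉ F →
      ∃ C w, ((M.con {x}) ↾ F').IsCircuit' C ∧ y ∈ C ∧ w ∈ C ∧ w ∈ F := by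
    intro y hy hyF
    obtain ⟨B, hB⟩ := (M.con {x}).exists_isBasis F hFN
    have hycl : y ∈ (M.con {x}).closure B := by
      rw [hB.closure_eq_closure]; exact hy
    have hyB : y ∉ B := fun h => hyF (hB.subset h)
    have hBfin : B.Finite := hfin.ground_finite.subset
      ((hB.subset.trans hFE : B ⊆ M.E))
    obtain ⟨C, hC, hyC, hCsub⟩ := fund_circuit' hB.indep hBfin hycl hyB
    have hCF' : C ⊆ F' := hCsub.trans (insert_subset hy ((hB.subset).trans hFF'))
    have hCR : ((M.con {x}) ↾ F').IsCircuit' C := (circuit_restrict_iff hF'E hCF').2 hC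
    obtain ⟨w, hwC, hwB⟩ : ∃ w ∈ C, w ∈ B := by
      by_contra h
      push_neg at h
      have hCy : C ⊆ {y} := by
        intro a ha
        rcases hCsub ha with rfl | hb
        · exact rfl
        · exact absurd hb (h a ha)
      exact hC.1.1 ((hNloopless y (hF'E hy)).subset hCy)
    exact ⟨C, w, hCR, hyC, hwC, hB.subset hwB⟩
  have key : ∀ v ∈ F', ∃ w ∈ F, ((M.con {x}) ↾ F').ConnTo v w := by
    intro v hv
    by_cases hvF : v ∈ F
    · exact ⟨v, hvF, Or.inl ⟨rfl, hv⟩⟩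
    · obtain ⟨C, w, hC, hvC, hwC, hwF⟩ := claim2 v hv hvF
      exact ⟨w, hwF, Or.inr ⟨C, hC, hvC, hwC⟩⟩
  refine ⟨flat_closure' _ _, hFne.mono hFF', fun y z hy hz => ?_⟩
  obtain ⟨wy, hwyF, hy'⟩ := key y hy
  obtain ⟨wz, hwzF, hz'⟩ := key z hz
  exact ConnTo.trans hRfin hy' (ConnTo.trans hRfin (claim1 wy hwyF wz hwzF) hz'.symm)

end Statements
end

section
/- Let M be a lattice path matroid with path order e_1 < e_2 < ⋯ < e_n and corresponding interval presentation (J_1,…,J_r) with J_i = [a_i, b_i]. Then M is connected if and only if a_1 = e_1, b_r = e_n, and a_{i+1} ≤ b_i for all i with 1 ≤ i < r. -/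
open Matroid Set

namespace IntervalPres
variable {α : Type*} {M : Matroid α} {n r : ℕ} (P : IntervalPres M n r)

/-- Lower endpoints as a `ℕ`-valued function, with sentinel values `≥ n` beyond `r`. -/
def A (j : ℕ) : ℕ := if h : j < r then (P.a ⟨j, h⟩).1 else n + j

/-- Upper endpoints as a `ℕ`-valued function, with sentinel values `≥ n` beyond `r`. -/
def B (j : ℕ) : ℕ := if h : j < r then (P.b ⟨j, h⟩).1 else n + j

lemma A_lt_n {j : ℕ} (h : j < r) : P.A j < n := by
  simp only [A, dif_pos h]; exact (P.a ⟨j, h⟩).2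

lemma B_lt_n {j : ℕ} (h : j < r) : P.B j < n := by
  simp only [B, dif_pos h]; exact (P.b ⟨j, h⟩).2

lemma A_strictMono : StrictMono P.A := by
  intro i j hij
  by_cases hi : i < r
  · by_cases hj : j < r
    · simp only [A, dif_pos hi, dif_pos hj]; exact P.ha (show (⟨i, hi⟩ : Fin r) < ⟨j, hj⟩ from hij)
    · simp only [A, dif_pos hi, dif_neg hj]
      exact lt_of_lt_of_le (P.a ⟨i, hi⟩).2 (Nat.le_add_right _ _)
  · have hj : ¬ j < r := fun h => hi (lt_trans hij h)
    simp only [A, dif_neg hi, dif_neg hj]; omega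

lemma B_strictMono : StrictMono P.B := by
  intro i j hij
  by_cases hi : i < r
  · by_cases hj : j < r
    · simp only [B, dif_pos hi, dif_pos hj]; exact P.hb (show (⟨i, hi⟩ : Fin r) < ⟨j, hj⟩ from hij)
    · simp only [B, dif_pos hi, dif_neg hj]
      exact lt_of_lt_of_le (P.b ⟨i, hi⟩).2 (Nat.le_add_right _ _)
  · have hj : ¬ j < r := fun h => hi (lt_trans hij h)
    simp only [B, dif_neg hi, dif_neg hj]; omega

lemma A_le_B (j : ℕ) : P.A j ≤ P.B j := by
  by_cases h : j < r
  · simp only [A, B, dif_pos h]; exact P.hab ⟨j, h⟩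
  · simp [A, B, dif_neg h]

lemma le_A (j : ℕ) : j ≤ P.A j := P.A_strictMono.le_apply

lemma strictMono_add_le {f : ℕ → ℕ} (hf : StrictMono f) {i j : ℕ} (h : i ≤ j) :
    f i + (j - i) ≤ f j := by
  obtain ⟨d, rfl⟩ := Nat.exists_eq_add_of_le h
  induction d with
  | zero => simp
  | succ d ih =>
      have : f (i + d) < f (i + (d + 1)) := hf (by omega)
      omega

lemma mem_J_iff {m : ℕ} (hm : m < n) (j : Fin r) :
    P.e ⟨m, hm⟩ ∈ P.e '' Set.Icc (P.a j) (P.b j) ↔ P.A j.1 ≤ m ∧ m ≤ P.B j.1 := by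
  have hj : j.1 < r := j.2
  simp only [A, B, dif_pos hj]
  constructor
  · rintro ⟨i, hi, hei⟩
    have : i = ⟨m, hm⟩ := P.inj hei
    subst this
    exact ⟨hi.1, hi.2⟩
  · rintro ⟨h1, h2⟩
    exact ⟨⟨m, hm⟩, ⟨h1, h2⟩, rfl⟩

lemma mem_ground {m : ℕ} (hm : m < n) : P.e ⟨m, hm⟩ ∈ M.E := by
  rw [← P.ground]; exact ⟨_, rfl⟩

/-- The key translation: independence of `P.e '' S` amounts to a system of distinct
representatives among the intervals. -/
lemma indep_iff (hr0 : 0 < r) (S : Set (Fin n)) :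
    M.Indep (P.e '' S) ↔
      ∃ g : Fin n → Fin r, Set.InjOn g S ∧ ∀ i ∈ S, P.A (g i).1 ≤ i.1 ∧ i.1 ≤ P.B (g i).1 := by
  have hSE : P.e '' S ⊆ M.E := by
    rintro x ⟨i, -, rfl⟩
    rw [← P.ground]; exact ⟨i, rfl⟩
  rw [(P.pres.2 _ hSE)]
  constructor
  · rintro ⟨f, hinj, hmem⟩
    refine ⟨fun i => f (P.e i), fun i hi j hj hij => P.inj.eq_iff.mp ?_, fun i hi => ?_⟩
    · exact hinj ⟨i, hi, rfl⟩ ⟨j, hj, rfl⟩ hij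
    · obtain ⟨m, hm, hem⟩ := hmem (P.e i) ⟨i, hi, rfl⟩
      have hmi : m = i := P.inj hem
      subst hmi
      have hj : (f (P.e m)).1 < r := (f (P.e m)).2
      simp only [A, B, dif_pos hj]
      exact ⟨hm.1, hm.2⟩
  · rintro ⟨g, hinj, hmem⟩
    classical
    refine ⟨fun x => if hx : ∃ i ∈ S, P.e i = x then g hx.choose else ⟨0, hr0⟩, ?_, ?_⟩
    · rintro x ⟨i, hi, rfl⟩ y ⟨j, hj, rfl⟩ hxy
      have hxe : ∃ i' ∈ S, P.e i' = P.e i := ⟨i, hi, rfl⟩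
      have hye : ∃ i' ∈ S, P.e i' = P.e j := ⟨j, hj, rfl⟩
      dsimp only at hxy
      rw [dif_pos hxe, dif_pos hye] at hxy
      have hxi : hxe.choose = i := P.inj hxe.choose_spec.2
      have hyj : hye.choose = j := P.inj hye.choose_spec.2
      rw [hxi, hyj] at hxy
      exact congrArg P.e (hinj hi hj hxy)
    · rintro x ⟨i, hi, rfl⟩
      have hxe : ∃ i' ∈ S, P.e i' = P.e i := ⟨i, hi, rfl⟩
      dsimp only
      rw [dif_pos hxe]
      have hxi : hxe.choose = i := P.inj hxe.choose_spec.2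
      rw [hxi]
      obtain ⟨h1, h2⟩ := hmem i hi
      have hj : (g i).1 < r := (g i).2
      simp only [A, B, dif_pos hj] at h1 h2
      exact ⟨i, ⟨h1, h2⟩, rfl⟩

lemma isCircuit_of_slots (hr0 : 0 < r) (y : ℕ → ℕ) (w₀ W : ℕ)
    (hwW : w₀ ≤ W + 1) (hWr : W < r)
    (hyn : ∀ w, w₀ ≤ w → w ≤ W + 1 → y w < n)
    (hmono : ∀ w1 w2, w₀ ≤ w1 → w1 < w2 → w2 ≤ W + 1 → y w1 < y w2)
    (hmem1 : ∀ w, w₀ ≤ w → w ≤ W → P.A w ≤ y w ∧ y w ≤ P.B w)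
    (hmem2 : ∀ w, w₀ < w → w ≤ W + 1 → P.A (w - 1) ≤ y w ∧ y w ≤ P.B (w - 1))
    (hlo : ∀ j, j < w₀ → P.B j < y w₀)
    (hhi : ∀ j, W < j → y (W + 1) < P.A j) :
    M.IsCircuit' (P.e '' {i : Fin n | ∃ w, w₀ ≤ w ∧ w ≤ W + 1 ∧ i.1 = y w}) := by
  classical
  set S : Set (Fin n) := {i : Fin n | ∃ w, w₀ ≤ w ∧ w ≤ W + 1 ∧ i.1 = y w} with hS
  have npos : 0 < n := lt_of_le_of_lt (Nat.zero_le _) (hyn w₀ le_rfl hwW)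
  set Y : ℕ → Fin n := fun w => if h : y w < n then ⟨y w, h⟩ else ⟨0, npos⟩ with hY
  have hYval : ∀ w, w₀ ≤ w → w ≤ W + 1 → (Y w).1 = y w := by
    intro w h1 h2
    simp only [hY, dif_pos (hyn w h1 h2)]
  have hSeq : S = Y '' Set.Icc w₀ (W + 1) := by
    ext i
    constructor
    · rintro ⟨w, h1, h2, hw⟩
      exact ⟨w, ⟨h1, h2⟩, Fin.ext (by rw [hYval w h1 h2, hw])⟩
    · rintro ⟨w, ⟨h1, h2⟩, rfl⟩
      exact ⟨w, h1, h2, hYval w h1 h2⟩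
  -- the ground set membership
  have hSE : P.e '' S ⊆ M.E := by
    rintro x ⟨i, -, rfl⟩; rw [← P.ground]; exact ⟨i, rfl⟩
  -- slot bounds for any SDR
  have hdep : ¬ M.Indep (P.e '' S) := by
    intro hI
    rw [P.indep_iff hr0] at hI
    obtain ⟨g, hinj, hmem⟩ := hI
    have hrange : ∀ i ∈ S, (g i).1 ∈ Set.Icc w₀ W := by
      rintro i ⟨w, h1, h2, hw⟩
      obtain ⟨hA, hB⟩ := hmem i ⟨w, h1, h2, hw⟩
      constructor
      · by_contra hcon
        push_neg at hcon
        have := hlo (g i).1 hcon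
        have hge : y w₀ ≤ (i : ℕ) := by
          rcases eq_or_lt_of_le h1 with h | h
          · rw [← h] at hw; omega
          · have := hmono w₀ w le_rfl h h2; omega
        omega
      · by_contra hcon
        push_neg at hcon
        have := hhi (g i).1 hcon
        have hle : (i : ℕ) ≤ y (W + 1) := by
          rcases eq_or_lt_of_le h2 with h | h
          · rw [h] at hw; omega
          · have := hmono w (W + 1) h1 h le_rfl; omega
        omega
    have hcard1 : S.ncard = W + 2 - w₀ := by
      rw [hSeq, Set.ncard_image_of_injOn, ← Finset.coe_Icc, Set.ncard_coe_finset,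
        Nat.card_Icc]
      intro w1 hw1 w2 hw2 he
      simp only [Set.mem_Icc] at hw1 hw2
      have : y w1 = y w2 := by
        rw [← hYval w1 hw1.1 hw1.2, ← hYval w2 hw2.1 hw2.2, he]
      rcases lt_trichotomy w1 w2 with h | h | h
      · exact absurd (hmono w1 w2 hw1.1 h hw2.2) (by omega)
      · exact h
      · exact absurd (hmono w2 w1 hw2.1 h hw1.2) (by omega)
    have hcard2 : S.ncard ≤ W + 1 - w₀ := by
      have := Set.ncard_le_ncard_of_injOn (fun i => (g i).1) hrange
        (fun i hi j hj hij => hinj hi hj (Fin.ext hij)) (Set.finite_Icc _ _)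
      rwa [← Finset.coe_Icc, Set.ncard_coe_finset, Nat.card_Icc] at this
    omega
  constructor
  · exact ⟨hdep, hSE⟩
  · intro D hD hDC
    by_contra hne
    obtain ⟨c, hcC, hcD⟩ := Set.exists_of_ssubset (ssubset_of_subset_of_ne hDC hne)
    obtain ⟨i₀, hi₀S, rfl⟩ := hcC
    obtain ⟨w₀', hw1', hw2', hwv'⟩ := hi₀S
    -- D is contained in the image of S \ {i₀}, which is independent
    have hindep : M.Indep (P.e '' (S \ {i₀})) := by
      rw [P.indep_iff hr0]
      set G : ℕ → Fin r := fun w => ⟨(if w < w₀' then w else w - 1) % r, Nat.mod_lt _ hr0⟩ with hG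
      have hGval : ∀ w, w₀ ≤ w → w ≤ W + 1 → w ≠ w₀' →
          (G w).1 = if w < w₀' then w else w - 1 := by
        intro w h1 h2 h3
        have : (if w < w₀' then w else w - 1) < r := by
          split <;> omega
        simp only [hG, Nat.mod_eq_of_lt this]
      refine ⟨fun i => if hx : ∃ w, (w₀ ≤ w ∧ w ≤ W + 1 ∧ w ≠ w₀') ∧ (i : ℕ) = y w
          then G hx.choose else ⟨0, hr0⟩, ?_, ?_⟩
      · rintro i ⟨hiS, hine⟩ j ⟨hjS, hjne⟩ hij
        obtain ⟨wi, h1i, h2i, hvi⟩ := hiS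
        obtain ⟨wj, h1j, h2j, hvj⟩ := hjS
        have hwine : wi ≠ w₀' := by
          intro h; subst h
          exact hine (Fin.ext (by omega))
        have hwjne : wj ≠ w₀' := by
          intro h; subst h
          exact hjne (Fin.ext (by omega))
        have hxi : ∃ w, (w₀ ≤ w ∧ w ≤ W + 1 ∧ w ≠ w₀') ∧ (i : ℕ) = y w :=
          ⟨wi, ⟨h1i, h2i, hwine⟩, hvi⟩
        have hxj : ∃ w, (w₀ ≤ w ∧ w ≤ W + 1 ∧ w ≠ w₀') ∧ (j : ℕ) = y w :=
          ⟨wj, ⟨h1j, h2j, hwjne⟩, hvj⟩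
        dsimp only at hij
        rw [dif_pos hxi, dif_pos hxj] at hij
        obtain ⟨⟨ha1, ha2, ha3⟩, ha4⟩ := hxi.choose_spec
        obtain ⟨⟨hb1, hb2, hb3⟩, hb4⟩ := hxj.choose_spec
        set wa := hxi.choose
        set wb := hxj.choose
        have hval : (G wa).1 = (G wb).1 := by rw [hij]
        rw [hGval wa ha1 ha2 ha3, hGval wb hb1 hb2 hb3] at hval
        have : wa = wb := by
          rcases Nat.lt_or_ge wa w₀' with h | h <;> rcases Nat.lt_or_ge wb w₀' with h' | h' <;>
            simp only [if_pos, if_neg, h, h', not_lt] at hval <;> omega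
        have : (i : ℕ) = (j : ℕ) := by rw [ha4, hb4, this]
        exact Fin.ext this
      · rintro i ⟨hiS, hine⟩
        obtain ⟨wi, h1i, h2i, hvi⟩ := hiS
        have hwine : wi ≠ w₀' := by
          intro h; subst h
          exact hine (Fin.ext (by omega))
        have hxi : ∃ w, (w₀ ≤ w ∧ w ≤ W + 1 ∧ w ≠ w₀') ∧ (i : ℕ) = y w :=
          ⟨wi, ⟨h1i, h2i, hwine⟩, hvi⟩
        dsimp only
        rw [dif_pos hxi]
        obtain ⟨⟨ha1, ha2, ha3⟩, ha4⟩ := hxi.choose_spec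
        set wa := hxi.choose
        rw [hGval wa ha1 ha2 ha3]
        rcases Nat.lt_or_ge wa w₀' with h | h
        · rw [if_pos h]
          have := hmem1 wa ha1 (by omega)
          omega
        · rw [if_neg (by omega)]
          have hwa : w₀ < wa := by omega
          have := hmem2 wa hwa ha2
          omega
    have hDsub : D ⊆ P.e '' (S \ {i₀}) := by
      intro x hxD
      obtain ⟨j, hjS, rfl⟩ := hDC hxD
      refine ⟨j, ⟨hjS, ?_⟩, rfl⟩
      intro h
      rw [Set.mem_singleton_iff] at h
      subst h
      exact hcD hxD
    exact hD.not_indep (hindep.subset hDsub)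

lemma n_le_A {j : ℕ} (h : r ≤ j) : P.A j = n + j := by
  simp only [A, dif_neg (by omega : ¬ j < r)]

lemma lt_of_adj {f : ℕ → ℕ} {a b : ℕ} (h : ∀ w, a ≤ w → w + 1 ≤ b → f w < f (w + 1)) :
    ∀ w1 w2, a ≤ w1 → w1 < w2 → w2 ≤ b → f w1 < f w2 := by
  intro w1 w2 h1 h2 h3
  induction w2 with
  | zero => omega
  | succ m ih =>
    rcases Nat.lt_or_ge w1 m with hm | hm
    · exact lt_trans (ih hm (by omega)) (h m (by omega) h3)
    · have hw : w1 = m := by omega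
      subst hw
      exact h w1 h1 h3

lemma exists_circuit (hr0 : 0 < r) (h0 : P.A 0 = 0) (h1 : P.B (r - 1) = n - 1)
    (hov : ∀ i, i + 1 < r → P.A (i + 1) ≤ P.B i) {p q : ℕ} (hpq : p < q) (hq : q < n) :
    ∃ C, M.IsCircuit' C ∧ P.e ⟨p, by omega⟩ ∈ C ∧ P.e ⟨q, hq⟩ ∈ C := by
  classical
  have hp : p < n := by omega
  have hAmono := P.A_strictMono
  have hBmono := P.B_strictMono
  -- h : the greatest j with A j ≤ p
  obtain ⟨h, hAh, hhr, hA_gt⟩ :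
      ∃ h, P.A h ≤ p ∧ h ≤ r - 1 ∧ ∀ j, h < j → p < P.A j := by
    refine ⟨Nat.findGreatest (fun j => P.A j ≤ p) (r - 1), ?_, Nat.findGreatest_le _, ?_⟩
    · exact Nat.findGreatest_spec (P := fun j => P.A j ≤ p) (Nat.zero_le _)
        (show P.A 0 ≤ p by rw [h0]; exact Nat.zero_le p)
    · intro j hj
      rcases Nat.lt_or_ge j r with hjr | hjr
      · have := Nat.findGreatest_is_greatest (P := fun j => P.A j ≤ p) hj (by omega)
        omega
      · have := P.n_le_A hjr; omega
  -- k : the least j with q ≤ B j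
  obtain ⟨k, hBk, hkr, hB_lt⟩ :
      ∃ k, q ≤ P.B k ∧ k ≤ r - 1 ∧ ∀ j, j < k → P.B j < q := by
    have hkex : ∃ j, q ≤ P.B j := ⟨r - 1, by omega⟩
    refine ⟨Nat.find hkex, Nat.find_spec hkex, Nat.find_le (by omega), ?_⟩
    intro j hj
    have := Nat.find_min hkex hj
    omega
  have hph : h ≤ p := le_trans (P.le_A h) hAh
  have hBh : p ≤ P.B h := by
    rcases Nat.lt_or_ge h (r - 1) with hlt | hge
    · have h2 := hov h (by omega)
      have h3 := hA_gt (h + 1) (by omega)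
      omega
    · have heq : h = r - 1 := by omega
      rw [heq, h1]; omega
  have hAk : P.A k < q := by
    rcases Nat.eq_zero_or_pos k with h' | h'
    · rw [h', h0]; omega
    · have h2 := hov (k - 1) (by omega)
      have h3 := hB_lt (k - 1) (by omega)
      have heq : k - 1 + 1 = k := by omega
      rw [heq] at h2
      omega
  obtain ⟨t, hth, htk, htmax⟩ : ∃ t, h < t ∧ k < t ∧ (t = h + 1 ∨ t = k + 1) := by
    rcases le_or_gt h k with h' | h'
    · exact ⟨k + 1, by omega, by omega, Or.inr rfl⟩
    · exact ⟨h + 1, by omega, by omega, Or.inl rfl⟩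
  have htr : t ≤ r := by omega
  have hBt : q ≤ P.B (t - 1) := by
    rcases htmax with h' | h'
    · have heq : t - 1 = h := by omega
      rw [heq]
      rcases eq_or_lt_of_le (show k ≤ h by omega) with h'' | h''
      · rw [← h'']; exact hBk
      · exact le_trans hBk (le_of_lt (hBmono h''))
    · have heq : t - 1 = k := by omega
      rw [heq]; exact hBk
  have hAt : P.A (t - 1) ≤ q := by
    rcases htmax with h' | h'
    · have heq : t - 1 = h := by omega
      rw [heq]; omega
    · have heq : t - 1 = k := by omega
      rw [heq]; omega
  -- w₀ : start of the window
  obtain ⟨w₀, hw₀h, hQw₀, hnotQ⟩ :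
      ∃ w₀, w₀ ≤ h ∧ (w₀ = 0 ∨ P.B (w₀ - 1) + h < p + w₀) ∧
        ∀ w, w₀ < w → w ≤ h → p + w ≤ P.B (w - 1) + h := by
    set Q : ℕ → Prop := fun w => w = 0 ∨ P.B (w - 1) + h < p + w with hQ
    refine ⟨Nat.findGreatest Q h, Nat.findGreatest_le _,
      Nat.findGreatest_spec (P := Q) (Nat.zero_le _) (Or.inl rfl), ?_⟩
    intro w hw1 hw2
    have := Nat.findGreatest_is_greatest (P := Q) hw1 hw2
    simp only [hQ, not_or, not_lt] at this
    exact this.2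
  -- W : end of the window
  obtain ⟨W, hWt, hWr, hWgt, hWmin⟩ :
      ∃ W, t - 1 ≤ W ∧ W ≤ r - 1 ∧ q + W + 1 < P.A (W + 1) + t ∧
        ∀ w, t - 1 ≤ w → w < W → P.A (w + 1) + t ≤ q + w + 1 := by
    have hWex : ∃ w, t - 1 ≤ w ∧ q + w + 1 < P.A (w + 1) + t := by
      refine ⟨r - 1, by omega, ?_⟩
      have := P.n_le_A (show r ≤ r - 1 + 1 by omega)
      omega
    refine ⟨Nat.find hWex, (Nat.find_spec hWex).1,
      Nat.find_le ⟨by omega, by have := P.n_le_A (show r ≤ r - 1 + 1 by omega); omega⟩,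
      (Nat.find_spec hWex).2, ?_⟩
    intro w hw1 hw2
    have := Nat.find_min hWex hw2
    simp only [not_and, not_lt] at this
    exact this hw1
  -- the slot positions
  set y : ℕ → ℕ := fun w => if w ≤ h then p + w - h else if w ≤ k then P.A w else q + w - t
    with hy
  have hyh : y h = p := by simp [hy]
  have hyt : y t = q := by
    have h1' : ¬ t ≤ h := by omega
    have h2' : ¬ t ≤ k := by omega
    simp only [hy, if_neg h1', if_neg h2']
    omega
  have hkW : k ≤ W := by omega
  have hhW : h ≤ W := by omega
  have hw₀W : w₀ ≤ W + 1 := by omega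
  have hBlow : ∀ w, t - 1 ≤ w → q + w ≤ P.B w + t - 1 := by
    intro w hw
    have h2 := strictMono_add_le hBmono hw
    omega
  have hBn : ∀ w, w ≤ r - 1 → P.B w ≤ n - 1 := by
    intro w hw
    rcases eq_or_lt_of_le hw with h' | h'
    · rw [h', h1]
    · have := hBmono h'; omega
  -- monotonicity, adjacent version
  have hadj : ∀ w, w₀ ≤ w → w + 1 ≤ W + 1 → y w < y (w + 1) := by
    intro w hw1 hw2
    rcases Nat.lt_or_ge w h with hcase | hcase
    · have e1 : y w = p + w - h := by simp only [hy, if_pos (le_of_lt hcase)]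
      have e2 : y (w + 1) = p + (w + 1) - h := by
        simp only [hy, if_pos (show w + 1 ≤ h by omega)]
      omega
    · rcases eq_or_lt_of_le hcase with hcase2 | hcase2
      · -- w = h
        have e1 : y w = p := hcase2 ▸ hyh
        rcases le_or_gt (w + 1) k with h' | h'
        · have e2 : y (w + 1) = P.A (w + 1) := by
            simp only [hy, if_neg (show ¬ w + 1 ≤ h by omega), if_pos h']
          have := hA_gt (w + 1) (by omega)
          omega
        · have hth : t = w + 1 := by omega
          have e2 : y (w + 1) = q := by rw [hth] at hyt; exact hyt
          omega
      · -- h < w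
        rcases le_or_gt (w + 1) k with h' | h'
        · have e1 : y w = P.A w := by
            simp only [hy, if_neg (show ¬ w ≤ h by omega), if_pos (show w ≤ k by omega)]
          have e2 : y (w + 1) = P.A (w + 1) := by
            simp only [hy, if_neg (show ¬ w + 1 ≤ h by omega), if_pos h']
          rw [e1, e2]
          exact hAmono (by omega)
        · rcases le_or_gt w k with h'' | h''
          · -- w = k > h, t = k + 1
            have hwk : w = k := by omega
            have e1 : y w = P.A w := by
              simp only [hy, if_neg (show ¬ w ≤ h by omega), if_pos h'']
            have hth : t = w + 1 := by omega
            have e2 : y (w + 1) = q := by rw [hth] at hyt; exact hyt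
            rw [e1, e2, hwk]
            exact hAk
          · -- w ≥ t
            have e1 : y w = q + w - t := by
              simp only [hy, if_neg (show ¬ w ≤ h by omega), if_neg (show ¬ w ≤ k by omega)]
            have e2 : y (w + 1) = q + (w + 1) - t := by
              simp only [hy, if_neg (show ¬ w + 1 ≤ h by omega),
                if_neg (show ¬ w + 1 ≤ k by omega)]
            have hwt : t ≤ w := by omega
            omega
  have hmono : ∀ w1 w2, w₀ ≤ w1 → w1 < w2 → w2 ≤ W + 1 → y w1 < y w2 := lt_of_adj hadj
  have hyW1 : y (W + 1) = q + (W + 1) - t := by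
    simp only [hy, if_neg (show ¬ W + 1 ≤ h by omega), if_neg (show ¬ W + 1 ≤ k by omega)]
  have hyW1n : y (W + 1) < n := by
    have hb1 := hBlow W (by omega)
    have hb2 := hBn W hWr
    omega
  have hyn : ∀ w, w₀ ≤ w → w ≤ W + 1 → y w < n := by
    intro w h1' h2'
    rcases eq_or_lt_of_le h2' with h' | h'
    · rw [h']; exact hyW1n
    · exact lt_trans (hmono w (W + 1) h1' h' le_rfl) hyW1n
  -- membership conditions
  have hmem1 : ∀ w, w₀ ≤ w → w ≤ W → P.A w ≤ y w ∧ y w ≤ P.B w := by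
    intro w h1' h2'
    rcases le_or_gt w h with hcase | hcase
    · have e1 : y w = p + w - h := by simp only [hy, if_pos hcase]
      have hAlow : P.A w + (h - w) ≤ P.A h := strictMono_add_le hAmono hcase
      constructor
      · omega
      · rcases eq_or_lt_of_le hcase with h' | h'
        · rw [e1, h']
          omega
        · have hb := hnotQ (w + 1) (by omega) (by omega)
          have hsub : w + 1 - 1 = w := by omega
          rw [hsub] at hb
          omega
    · rcases le_or_gt w k with h'' | h''
      · have e1 : y w = P.A w := by
          simp only [hy, if_neg (show ¬ w ≤ h by omega), if_pos h'']
        rw [e1]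
        exact ⟨le_rfl, P.A_le_B w⟩
      · have hwt : t ≤ w := by omega
        have e1 : y w = q + w - t := by
          simp only [hy, if_neg (show ¬ w ≤ h by omega), if_neg (show ¬ w ≤ k by omega)]
        constructor
        · have hb := hWmin (w - 1) (by omega) (by omega)
          have hsub : w - 1 + 1 = w := by omega
          rw [hsub] at hb
          omega
        · have hb := hBlow w (by omega)
          omega
  have hmem2 : ∀ w, w₀ < w → w ≤ W + 1 → P.A (w - 1) ≤ y w ∧ y w ≤ P.B (w - 1) := by
    intro w h1' h2'
    rcases le_or_gt w h with hcase | hcase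
    · have e1 : y w = p + w - h := by simp only [hy, if_pos hcase]
      have hAlow : P.A (w - 1) + (h - (w - 1)) ≤ P.A h := strictMono_add_le hAmono (by omega)
      have hb := hnotQ w h1' hcase
      omega
    · rcases le_or_gt w k with h'' | h''
      · have e1 : y w = P.A w := by
          simp only [hy, if_neg (show ¬ w ≤ h by omega), if_pos h'']
        have hov' := hov (w - 1) (by omega)
        have hsub : w - 1 + 1 = w := by omega
        rw [hsub] at hov'
        have hb : P.A (w - 1) < P.A w := hAmono (by omega)
        omega
      · have hwt : t ≤ w := by omega
        have e1 : y w = q + w - t := by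
          simp only [hy, if_neg (show ¬ w ≤ h by omega), if_neg (show ¬ w ≤ k by omega)]
        constructor
        · rcases eq_or_lt_of_le hwt with h' | h'
          · rw [← h', hyt]
            exact hAt
          · have hb := hWmin (w - 2) (by omega) (by omega)
            have hsub : w - 2 + 1 = w - 1 := by omega
            rw [hsub] at hb
            omega
        · have hb := hBlow (w - 1) (by omega)
          omega
  have hlo : ∀ j, j < w₀ → P.B j < y w₀ := by
    intro j hj
    have e1 : y w₀ = p + w₀ - h := by simp only [hy, if_pos hw₀h]
    rcases hQw₀ with h' | h'
    · omega
    · have hb : P.B j + (w₀ - 1 - j) ≤ P.B (w₀ - 1) := strictMono_add_le hBmono (by omega)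
      omega
  have hhi : ∀ j, W < j → y (W + 1) < P.A j := by
    intro j hj
    rcases eq_or_lt_of_le (show W + 1 ≤ j by omega) with h' | h'
    · rw [← h']; omega
    · have hb : P.A (W + 1) < P.A j := hAmono h'
      omega
  have hcirc := P.isCircuit_of_slots hr0 y w₀ W hw₀W (by omega) hyn hmono hmem1 hmem2 hlo hhi
  refine ⟨_, hcirc, ?_, ?_⟩
  · exact ⟨⟨p, hp⟩, ⟨h, by omega, by omega, by simpa using hyh.symm⟩, rfl⟩
  · exact ⟨⟨q, hq⟩, ⟨t, by omega, by omega, by simpa using hyt.symm⟩, rfl⟩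

lemma dep_singleton_of_loop (hr0 : 0 < r) {m : ℕ} (hm : m < n)
    (hloop : ∀ j, j < r → ¬ (P.A j ≤ m ∧ m ≤ P.B j)) : M.Dep {P.e ⟨m, hm⟩} := by
  rw [Matroid.dep_iff]
  constructor
  · intro hI
    rw [← Set.image_singleton, P.indep_iff hr0] at hI
    obtain ⟨g, -, hmem⟩ := hI
    have := hmem ⟨m, hm⟩ rfl
    exact hloop (g ⟨m, hm⟩).1 (g ⟨m, hm⟩).2 this
  · rintro x hx
    rw [Set.mem_singleton_iff] at hx
    subst hx
    exact P.mem_ground hm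

lemma not_connTo_of_loop (hr0 : 0 < r) {m : ℕ} (hm : m < n)
    (hloop : ∀ j, j < r → ¬ (P.A j ≤ m ∧ m ≤ P.B j)) {x : α} (hx : x ≠ P.e ⟨m, hm⟩) :
    ¬ M.ConnTo (P.e ⟨m, hm⟩) x := by
  rintro (⟨heq, -⟩ | ⟨C, hC, hmC, hxC⟩)
  · exact hx heq.symm
  · have hdep := P.dep_singleton_of_loop hr0 hm hloop
    have hCeq := hC.2 _ hdep (Set.singleton_subset_iff.mpr hmC)
    rw [← hCeq] at hxC
    exact hx hxC

lemma not_isConnected_of_gap (hr0 : 0 < r) {i : ℕ} (hi : i + 1 < r)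
    (hgap : P.B i < P.A (i + 1)) : ¬ M.IsConnected := by
  classical
  intro hconn
  have hbn : P.B i < n := P.B_lt_n (by omega)
  have han : P.A (i + 1) < n := P.A_lt_n hi
  have hne : P.e ⟨P.B i, hbn⟩ ≠ P.e ⟨P.A (i + 1), han⟩ := by
    intro h
    have := P.inj h
    simp only [Fin.mk.injEq] at this
    omega
  have hct := hconn.2 (P.mem_ground hbn) (P.mem_ground han)
  rcases hct with ⟨heq, -⟩ | ⟨C, hC, hxC, hyC⟩
  · exact hne heq
  · -- every element of the circuit has a position
    have hCE : C ⊆ M.E := hC.1.subset_ground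
    by_cases hmid : ∃ z ∈ C, ∃ (m : ℕ) (hmn : m < n), z = P.e ⟨m, hmn⟩ ∧ P.B i < m ∧ m < P.A (i + 1)
    · obtain ⟨z, hzC, m, hmn, rfl, hm1, hm2⟩ := hmid
      have hloop : ∀ j, j < r → ¬ (P.A j ≤ m ∧ m ≤ P.B j) := by
        intro j hj hcon
        rcases Nat.lt_or_ge j (i + 1) with h' | h'
        · have : P.B j ≤ P.B i := by
            rcases eq_or_lt_of_le (show j ≤ i by omega) with h'' | h''
            · rw [h'']
            · exact le_of_lt (P.B_strictMono h'')
          omega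
        · have : P.A (i + 1) ≤ P.A j := by
            rcases eq_or_lt_of_le h' with h'' | h''
            · rw [← h'']
            · exact le_of_lt (P.A_strictMono h'')
          omega
      have hdep := P.dep_singleton_of_loop hr0 hmn hloop
      have hCeq := hC.2 _ hdep (Set.singleton_subset_iff.mpr hzC)
      rw [← hCeq] at hxC hyC
      rw [Set.mem_singleton_iff] at hxC hyC
      exact hne (hxC.trans hyC.symm)
    · -- C splits into a left and a right part, both independent; combine SDRs
      push_neg at hmid
      set SL : Set (Fin n) := {j | P.e j ∈ C ∧ j.1 ≤ P.B i} with hSL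
      set SR : Set (Fin n) := {j | P.e j ∈ C ∧ P.A (i + 1) ≤ j.1} with hSR
      have hCeq : C = P.e '' (SL ∪ SR) := by
        apply Set.Subset.antisymm
        · intro z hzC
          obtain ⟨j, rfl⟩ : ∃ j, P.e j = z := by
            have := hCE hzC
            rw [← P.ground] at this
            obtain ⟨j, hj⟩ := this
            exact ⟨j, hj⟩
          have := hmid (P.e j) hzC j.1 j.2 rfl
          rcases Nat.lt_or_ge (P.B i) j.1 with h' | h'
          · exact ⟨j, Or.inr ⟨hzC, by omega⟩, rfl⟩
          · exact ⟨j, Or.inl ⟨hzC, h'⟩, rfl⟩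
        · rintro z ⟨j, hj | hj, rfl⟩
          · exact hj.1
          · exact hj.1
      -- left part is independent
      have hindepL : M.Indep (P.e '' SL) := by
        by_contra hcon
        have hdep : M.Dep (P.e '' SL) := by
          rw [Matroid.dep_iff]
          exact ⟨hcon, by rintro z ⟨j, hj, rfl⟩; exact hCE hj.1⟩
        have := hC.2 _ hdep (by rintro z ⟨j, hj, rfl⟩; exact hj.1)
        have hyL : P.e ⟨P.A (i + 1), han⟩ ∈ P.e '' SL := this ▸ hyC
        obtain ⟨j, hj, hje⟩ := hyL
        have : j = ⟨P.A (i + 1), han⟩ := P.inj hje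
        subst this
        simp only [hSL, Set.mem_setOf_eq] at hj
        omega
      have hindepR : M.Indep (P.e '' SR) := by
        by_contra hcon
        have hdep : M.Dep (P.e '' SR) := by
          rw [Matroid.dep_iff]
          exact ⟨hcon, by rintro z ⟨j, hj, rfl⟩; exact hCE hj.1⟩
        have := hC.2 _ hdep (by rintro z ⟨j, hj, rfl⟩; exact hj.1)
        have hxL : P.e ⟨P.B i, hbn⟩ ∈ P.e '' SR := this ▸ hxC
        obtain ⟨j, hj, hje⟩ := hxL
        have : j = ⟨P.B i, hbn⟩ := P.inj hje
        subst this
        simp only [hSR, Set.mem_setOf_eq] at hj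
        omega
      rw [P.indep_iff hr0] at hindepL hindepR
      obtain ⟨gL, hinjL, hmemL⟩ := hindepL
      obtain ⟨gR, hinjR, hmemR⟩ := hindepR
      have hgL : ∀ j ∈ SL, (gL j).1 ≤ i := by
        intro j hj
        obtain ⟨h1, h2⟩ := hmemL j hj
        by_contra hcon
        have : P.A (i + 1) ≤ P.A (gL j).1 := by
          rcases eq_or_lt_of_le (show i + 1 ≤ (gL j).1 by omega) with h'' | h''
          · rw [← h'']
          · exact le_of_lt (P.A_strictMono h'')
        have hj2 : j.1 ≤ P.B i := hj.2
        omega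
      have hgR : ∀ j ∈ SR, i < (gR j).1 := by
        intro j hj
        obtain ⟨h1, h2⟩ := hmemR j hj
        by_contra hcon
        have : P.B (gR j).1 ≤ P.B i := by
          rcases eq_or_lt_of_le (show (gR j).1 ≤ i by omega) with h'' | h''
          · rw [h'']
          · exact le_of_lt (P.B_strictMono h'')
        have hj2 : P.A (i + 1) ≤ j.1 := hj.2
        omega
      have hindepC : M.Indep C := by
        rw [hCeq, P.indep_iff hr0]
        refine ⟨fun j => if j.1 ≤ P.B i then gL j else gR j, ?_, ?_⟩
        · intro j1 hj1 j2 hj2 hj12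
          dsimp only at hj12
          have hcase : ∀ j ∈ SL ∪ SR, j.1 ≤ P.B i → j ∈ SL := by
            rintro j (hj | hj) hle
            · exact hj
            · exfalso; have := hj.2; omega
          have hcase' : ∀ j ∈ SL ∪ SR, ¬ j.1 ≤ P.B i → j ∈ SR := by
            rintro j (hj | hj) hle
            · exact absurd hj.2 hle
            · exact hj
          by_cases hc1 : j1.1 ≤ P.B i <;> by_cases hc2 : j2.1 ≤ P.B i
          · rw [if_pos hc1, if_pos hc2] at hj12
            exact hinjL (hcase j1 hj1 hc1) (hcase j2 hj2 hc2) hj12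
          · rw [if_pos hc1, if_neg hc2] at hj12
            have h1 := hgL j1 (hcase j1 hj1 hc1)
            have h2 := hgR j2 (hcase' j2 hj2 hc2)
            rw [hj12] at h1
            omega
          · rw [if_neg hc1, if_pos hc2] at hj12
            have h1 := hgR j1 (hcase' j1 hj1 hc1)
            have h2 := hgL j2 (hcase j2 hj2 hc2)
            rw [← hj12] at h2
            omega
          · rw [if_neg hc1, if_neg hc2] at hj12
            exact hinjR (hcase' j1 hj1 hc1) (hcase' j2 hj2 hc2) hj12
        · intro j hj
          dsimp only
          by_cases hc : j.1 ≤ P.B i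
          · rw [if_pos hc]
            refine hmemL j ?_
            rcases hj with hj' | hj'
            · exact hj'
            · exfalso; have := hj'.2; omega
          · rw [if_neg hc]
            refine hmemR j ?_
            rcases hj with hj' | hj'
            · exact absurd hj'.2 hc
            · exact hj'
      exact hC.1.not_indep hindepC
end IntervalPres

section Statements

variable {α : Type*}

theorem connected_iff_interval_presentation
    (M : Matroid α) (n r : ℕ) (P : IntervalPres M n r) (hr : 0 < r) :
    M.IsConnected ↔
      ((P.a ⟨0, hr⟩).1 = 0 ∧ (P.b ⟨r - 1, by omega⟩).1 = n - 1 ∧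
        ∀ (i : ℕ) (hi : i + 1 < r), P.a ⟨i + 1, hi⟩ ≤ P.b ⟨i, by omega⟩) := by
  have npos : 0 < n := (P.a ⟨0, hr⟩).pos
  have hA0 : P.A 0 = (P.a ⟨0, hr⟩).1 := by simp [IntervalPres.A, hr]
  have hB1 : P.B (r - 1) = (P.b ⟨r - 1, by omega⟩).1 := by
    simp [IntervalPres.B, (by omega : r - 1 < r)]
  have hABi : ∀ (i : ℕ) (hi : i + 1 < r),
      P.A (i + 1) = (P.a ⟨i + 1, hi⟩).1 ∧ P.B i = (P.b ⟨i, by omega⟩).1 := by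
    intro i hi
    constructor
    · simp [IntervalPres.A, hi]
    · simp [IntervalPres.B, (by omega : i < r)]
  constructor
  · intro hconn
    refine ⟨?_, ?_, ?_⟩
    · by_contra hne
      have hA0pos : 0 < P.A 0 := by omega
      have hloop : ∀ j, j < r → ¬ (P.A j ≤ 0 ∧ 0 ≤ P.B j) := by
        intro j hj hcon
        have : P.A 0 ≤ P.A j := by
          rcases Nat.eq_zero_or_pos j with h' | h'
          · rw [h']
          · exact le_of_lt (P.A_strictMono h')
        omega
      have hxne : P.e ⟨P.A 0, P.A_lt_n hr⟩ ≠ P.e ⟨0, npos⟩ := by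
        intro h
        have := P.inj h
        simp only [Fin.mk.injEq] at this
        omega
      exact P.not_connTo_of_loop hr npos hloop hxne
        (hconn.2 (P.mem_ground npos) (P.mem_ground (P.A_lt_n hr)))
    · by_contra hne
      have hBlt : P.B (r - 1) < n := P.B_lt_n (by omega)
      have hm : n - 1 < n := by omega
      have hloop : ∀ j, j < r → ¬ (P.A j ≤ n - 1 ∧ n - 1 ≤ P.B j) := by
        intro j hj hcon
        have : P.B j ≤ P.B (r - 1) := by
          rcases eq_or_lt_of_le (show j ≤ r - 1 by omega) with h' | h'
          · rw [h']
          · exact le_of_lt (P.B_strictMono h')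
        omega
      have hxne : P.e ⟨P.B (r - 1), hBlt⟩ ≠ P.e ⟨n - 1, hm⟩ := by
        intro h
        have := P.inj h
        simp only [Fin.mk.injEq] at this
        omega
      exact P.not_connTo_of_loop hr hm hloop hxne
        (hconn.2 (P.mem_ground hm) (P.mem_ground hBlt))
    · intro i hi
      by_contra hne
      rw [Fin.not_le] at hne
      have hgap : P.B i < P.A (i + 1) := by
        rw [(hABi i hi).1, (hABi i hi).2]
        exact hne
      exact P.not_isConnected_of_gap hr hi hgap hconn
  · rintro ⟨h0, h1, hov⟩
    have h0' : P.A 0 = 0 := by rw [hA0]; exact h0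
    have h1' : P.B (r - 1) = n - 1 := by rw [hB1]; exact h1
    have hov' : ∀ i, i + 1 < r → P.A (i + 1) ≤ P.B i := by
      intro i hi
      rw [(hABi i hi).1, (hABi i hi).2]
      exact hov i hi
    constructor
    · exact ⟨P.e ⟨0, npos⟩, P.mem_ground npos⟩
    · intro x y hx hy
      rw [← P.ground] at hx hy
      obtain ⟨i, rfl⟩ := hx
      obtain ⟨j, rfl⟩ := hy
      rcases lt_trichotomy i.1 j.1 with hij | hij | hij
      · obtain ⟨C, hC, hpC, hqC⟩ := P.exists_circuit hr h0' h1' hov' hij j.2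
        exact Or.inr ⟨C, hC, hpC, hqC⟩
      · exact Or.inl ⟨congrArg P.e (Fin.ext hij), by rw [← P.ground]; exact ⟨i, rfl⟩⟩
      · obtain ⟨C, hC, hpC, hqC⟩ := P.exists_circuit hr h0' h1' hov' hij i.2
        exact Or.inr ⟨C, hC, hqC, hpC⟩

end Statements
end

section
/- Let M be a lattice path matroid with a fixed path order and corresponding interval presentation (J_1,…,J_r). If the elements of a basis of M, listed in increasing order with respect to the path order, are x_1 < x_2 < ⋯ < x_r, then x_i ∈ J_i for all i with 1 ≤ i ≤ r. -/
open Matroid Set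

section Statements

variable {α : Type*}

theorem base_mem_intervals
    (M : Matroid α) (n r : ℕ) (P : IntervalPres M n r)
    (x : Fin r → Fin n) (hx : StrictMono x)
    (hB : M.IsBase (Set.range fun i => P.e (x i))) :
    ∀ i : Fin r, P.e (x i) ∈ P.J i := by
  have hBE : (Set.range fun i => P.e (x i)) ⊆ M.E := hB.subset_ground
  obtain ⟨f, hfinj, hf⟩ := (P.pres.2 _ hBE).1 hB.indep
  set g : Fin r → Fin r := fun i => f (P.e (x i)) with hg
  have hex : Function.Injective (fun i => P.e (x i)) :=
    fun i j h => hx.injective (P.inj h)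
  have hginj : Function.Injective g := by
    intro i j h
    exact hex (hfinj (Set.mem_range_self i) (Set.mem_range_self j) h)
  have hmem : ∀ i, x i ∈ Set.Icc (P.a (g i)) (P.b (g i)) := by
    intro i
    obtain ⟨y, hy, hye⟩ := hf (P.e (x i)) (Set.mem_range_self i)
    obtain rfl := P.inj hye
    exact hy
  intro i
  have hlow : P.a i ≤ x i := by
    obtain ⟨j, hji, hij⟩ : ∃ j, j ≤ i ∧ i ≤ g j := by
      by_contra h
      push_neg at h
      have hcard := Finset.card_le_card_of_injOn g
        (fun j hj => Finset.mem_Iio.2 (h j (Finset.mem_Iic.1 hj)))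
        (hginj.injOn)
      rw [Fin.card_Iic, Fin.card_Iio] at hcard
      omega
    calc P.a i ≤ P.a (g j) := P.ha.monotone hij
      _ ≤ x j := (hmem j).1
      _ ≤ x i := hx.monotone hji
  have hhigh : x i ≤ P.b i := by
    obtain ⟨j, hji, hij⟩ : ∃ j, i ≤ j ∧ g j ≤ i := by
      by_contra h
      push_neg at h
      have hcard := Finset.card_le_card_of_injOn g
        (fun j hj => Finset.mem_Ioi.2 (h j (Finset.mem_Ici.1 hj)))
        (hginj.injOn)
      rw [Fin.card_Ici, Fin.card_Ioi] at hcard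
      have := i.2
      omega
    calc x i ≤ x j := hx.monotone hji
      _ ≤ P.b (g j) := (hmem j).2
      _ ≤ P.b i := P.hb.monotone hij
  exact Set.mem_image_of_mem P.e ⟨hlow, hhigh⟩

end Statements
end

section
/- Let F and G be pnc-flats of a lattice path matroid M with F ∩ G ≠ ∅. If F ∪ G spans M, then F ∪ G = E(M). -/
open Matroid Set

section LPMAux

open Set

namespace IntervalPres

variable {α : Type*} {M : Matroid α} {n r : ℕ}

/-- The set of elements all of whose presentation intervals lie within `[i, j]`. -/
def NA (P : IntervalPres M n r) (i j : ℕ) : Set α :=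
  {x | ∀ k : Fin r, x ∈ P.J k → i ≤ (k : ℕ) ∧ (k : ℕ) ≤ j}

lemma ground_finite (P : IntervalPres M n r) : M.E.Finite := by
  rw [← P.ground]; exact Set.finite_range _

lemma mem_ground_iff (P : IntervalPres M n r) {x : α} : x ∈ M.E ↔ ∃ p, P.e p = x := by
  rw [← P.ground]; exact Set.mem_range

lemma mem_J_iff_s7 (P : IntervalPres M n r) {k : Fin r} {p : Fin n} :
    P.e p ∈ P.J k ↔ P.a k ≤ p ∧ p ≤ P.b k := by
  constructor
  · rintro ⟨q, hq, he⟩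
    obtain rfl : q = p := P.inj he
    exact hq
  · intro h
    exact ⟨p, h, rfl⟩

lemma J_subset_ground (P : IntervalPres M n r) (k : Fin r) : P.J k ⊆ M.E := P.pres.1 k

lemma indep_iff_transversal (P : IntervalPres M n r) {X : Set α} (hX : X ⊆ M.E) :
    M.Indep X ↔ IsPartialTransversal P.J X := P.pres.2 X hX

lemma NA_mono (P : IntervalPres M n r) {i j i' j' : ℕ} (hi : i' ≤ i) (hj : j ≤ j') :
    P.NA i j ⊆ P.NA i' j' := by
  intro x hx k hk
  obtain ⟨h1, h2⟩ := hx k hk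
  omega

lemma indep_ncard_le_of_subset_NA (P : IntervalPres M n r) {I : Set α} {i j : ℕ}
    (hI : M.Indep I) (hIA : I ⊆ P.NA i j) : I.ncard ≤ j + 1 - i := by
  obtain ⟨f, hinj, hmem⟩ := (P.indep_iff_transversal hI.subset_ground).1 hI
  calc I.ncard = (f '' I).ncard := (Set.ncard_image_of_injOn hinj).symm
    _ = (Fin.val '' (f '' I)).ncard :=
        (Set.ncard_image_of_injOn (Fin.val_injective.injOn)).symm
    _ ≤ (Set.Icc i j).ncard := by
        refine Set.ncard_le_ncard ?_ (Set.finite_Icc i j)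
        rintro m ⟨k, ⟨x, hx, rfl⟩, rfl⟩
        obtain ⟨h1, h2⟩ := hIA hx _ (hmem x hx)
        exact Set.mem_Icc.2 ⟨h1, h2⟩
    _ = j + 1 - i := by
        rw [← Finset.coe_Icc, Set.ncard_coe_finset, Nat.card_Icc]

lemma dep_of_viol (P : IntervalPres M n r) {X : Set α} {i j : ℕ} (hX : X ⊆ M.E)
    (h : j + 1 - i < (X ∩ P.NA i j).ncard) : M.Dep X := by
  rw [Matroid.dep_iff]
  refine ⟨fun hI => ?_, hX⟩
  have := P.indep_ncard_le_of_subset_NA (I := X ∩ P.NA i j) (i := i) (j := j)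
    (hI.subset Set.inter_subset_left) Set.inter_subset_right
  omega

end IntervalPres

end LPMAux
section LPMAux2

open Set

namespace IntervalPres

variable {α : Type*} {M : Matroid α} {n r : ℕ}

lemma indep_of_bounds (P : IntervalPres M n r) {X : Set α} (hX : X ⊆ M.E)
    (hb : ∀ i j : ℕ, (X ∩ P.NA i j).ncard ≤ j + 1 - i) : M.Indep X := by
  classical
  rcases X.eq_empty_or_nonempty with rfl | ⟨x0, hx0⟩
  · exact M.empty_indep
  have hXfin : X.Finite := P.ground_finite.subset hX
  set N : α → Finset (Fin r) := fun x => Finset.univ.filter (fun k => x ∈ P.J k) with hN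
  have hNmem : ∀ x k, k ∈ N x ↔ x ∈ P.J k := by intro x k; simp [hN]
  have hnonloop : ∀ x ∈ X, (N x).Nonempty := by
    intro x hx
    by_contra h
    rw [Finset.not_nonempty_iff_eq_empty] at h
    have hxA : x ∈ P.NA 1 0 := by
      intro k hk
      exact absurd ((hNmem x k).2 hk) (by simp [h])
    have h1 : 0 < (X ∩ P.NA 1 0).ncard := by
      rw [Set.ncard_pos (hXfin.subset Set.inter_subset_left)]
      exact ⟨x, hx, hxA⟩
    have := hb 1 0
    omega
  have hconv : ∀ x ∈ X, ∀ (k k' m : Fin r), k ∈ N x → k' ∈ N x → k ≤ m → m ≤ k' →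
      m ∈ N x := by
    intro x hx k k' m hk hk' h1 h2
    obtain ⟨p, rfl⟩ := P.mem_ground_iff.1 (hX hx)
    rw [hNmem, P.mem_J_iff_s7] at hk hk' ⊢
    exact ⟨le_trans (P.ha.monotone h2) hk'.1, le_trans hk.2 (P.hb.monotone h1)⟩
  have hall : ∀ s : Finset {x // x ∈ X}, s.card ≤ (s.biUnion (fun x => N x.1)).card := by
    intro s
    induction s using Finset.strongInductionOn with
    | _ s ih =>
    rcases s.eq_empty_or_nonempty with rfl | hs
    · simp
    set T := s.biUnion (fun x => N x.1) with hT
    have hTmem : ∀ {x : {x // x ∈ X}}, x ∈ s → ∀ {k}, k ∈ N x.1 → k ∈ T := by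
      intro x hx k hk
      exact Finset.mem_biUnion.2 ⟨x, hx, hk⟩
    have hTne : (T.image Fin.val).Nonempty := by
      obtain ⟨x, hx⟩ := hs
      obtain ⟨k, hk⟩ := hnonloop x.1 x.2
      exact ⟨k.1, Finset.mem_image_of_mem _ (hTmem hx hk)⟩
    set jv : ℕ := (T.image Fin.val).max' hTne with hjv
    have hjmem : ∃ k ∈ T, (k : ℕ) = jv := by
      have := (T.image Fin.val).max'_mem hTne
      rw [← hjv] at this
      obtain ⟨k, hk, hkv⟩ := Finset.mem_image.1 this
      exact ⟨k, hk, hkv⟩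
    have hjub : ∀ k ∈ T, (k : ℕ) ≤ jv := fun k hk =>
      Finset.le_max' _ _ (Finset.mem_image_of_mem _ hk)
    set Q : ℕ → Prop := fun i => ∀ m, i ≤ m → m ≤ jv → ∃ k ∈ T, (k : ℕ) = m with hQ
    have hQj : Q jv := by
      intro m h1 h2
      obtain rfl : jv = m := le_antisymm h1 h2
      exact hjmem
    have hQex : ∃ i, Q i := ⟨jv, hQj⟩
    set iv := Nat.find hQex with hiv
    have hQi : Q iv := Nat.find_spec hQex
    have hminQ : ∀ m < iv, ¬ Q m := fun m hm => Nat.find_min hQex hm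
    have hij : iv ≤ jv := Nat.find_min' hQex hQj
    have hQclaim : ∀ (x : {x // x ∈ X}), x ∈ s → ∀ klo khi : Fin r, klo ∈ N x.1 →
        khi ∈ N x.1 → (klo : ℕ) < iv → iv ≤ (khi : ℕ) → False := by
      intro x hxs klo khi hklo hkhi hlo hhi
      refine hminQ klo.1 hlo ?_
      intro m h1 h2
      by_cases hm : iv ≤ m
      · exact hQi m hm h2
      · push_neg at hm
        have hmr : m < r := lt_of_le_of_lt (le_trans (le_of_lt hm) hhi) khi.2
        set mf : Fin r := ⟨m, hmr⟩ with hmf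
        have : mf ∈ N x.1 := by
          refine hconv x.1 x.2 klo khi mf hklo hkhi ?_ ?_
          · rw [Fin.le_def]; exact h1
          · rw [Fin.le_def]; exact le_trans (le_of_lt hm) hhi
        exact ⟨mf, hTmem hxs this, rfl⟩
    set s1 := s.filter (fun x => ∀ k ∈ N x.1, iv ≤ (k : ℕ)) with hs1
    set s2 := s.filter (fun x => ¬ ∀ k ∈ N x.1, iv ≤ (k : ℕ)) with hs2
    have hs1card : s1.card ≤ jv + 1 - iv := by
      have hsub : ((s1.image Subtype.val : Finset α) : Set α) ⊆ X ∩ P.NA iv jv := by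
        intro y hy
        rw [Finset.coe_image] at hy
        obtain ⟨x, hx1, rfl⟩ := hy
        rw [Finset.mem_coe, hs1, Finset.mem_filter] at hx1
        refine ⟨x.2, fun k hk => ?_⟩
        have hkN : k ∈ N x.1 := (hNmem _ _).2 hk
        exact ⟨hx1.2 k hkN, hjub k (hTmem hx1.1 hkN)⟩
      have h1 : s1.card = (s1.image Subtype.val).card :=
        (Finset.card_image_of_injective _ Subtype.val_injective).symm
      have h2 : ((s1.image Subtype.val : Finset α) : Set α).ncard ≤ (X ∩ P.NA iv jv).ncard :=
        Set.ncard_le_ncard hsub (hXfin.subset Set.inter_subset_left)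
      rw [Set.ncard_coe_finset] at h2
      have := hb iv jv
      omega
    have hs1ne : s1.Nonempty := by
      obtain ⟨kstar, hkT, hkval⟩ := hjmem
      obtain ⟨x, hxs, hkN⟩ := Finset.mem_biUnion.1 hkT
      refine ⟨x, Finset.mem_filter.2 ⟨hxs, fun k hk => ?_⟩⟩
      by_contra hlt
      push_neg at hlt
      exact hQclaim x hxs k kstar hk hkN hlt (by omega)
    have hs2sub : s2.biUnion (fun x => N x.1) ⊆ T.filter (fun k : Fin r => (k : ℕ) < iv) := by
      intro k hk
      obtain ⟨x, hxs2, hkN⟩ := Finset.mem_biUnion.1 hk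
      rw [hs2, Finset.mem_filter] at hxs2
      obtain ⟨hxs, hprop⟩ := hxs2
      push_neg at hprop
      obtain ⟨k0, hk0, hk0lt⟩ := hprop
      refine Finset.mem_filter.2 ⟨hTmem hxs hkN, ?_⟩
      by_contra hge
      push_neg at hge
      exact hQclaim x hxs k0 k hk0 hkN (by omega) hge
    have hs2ss : s2 ⊂ s := by
      refine Finset.ssubset_iff_of_subset (Finset.filter_subset _ _) |>.2 ?_
      obtain ⟨x, hx⟩ := hs1ne
      rw [hs1, Finset.mem_filter] at hx
      exact ⟨x, hx.1, by simp only [Finset.mem_filter]; tauto⟩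
    have hs2card : s2.card ≤ (T.filter (fun k : Fin r => (k : ℕ) < iv)).card :=
      le_trans (ih s2 hs2ss) (Finset.card_le_card hs2sub)
    have hTicc : jv + 1 - iv ≤ (T.filter (fun k : Fin r => iv ≤ (k : ℕ))).card := by
      have hsub : Finset.Icc iv jv ⊆ (T.filter (fun k : Fin r => iv ≤ (k : ℕ))).image Fin.val := by
        intro m hm
        rw [Finset.mem_Icc] at hm
        obtain ⟨k, hkT, hkv⟩ := hQi m hm.1 hm.2
        exact Finset.mem_image.2 ⟨k, Finset.mem_filter.2 ⟨hkT, by omega⟩, hkv⟩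
      calc jv + 1 - iv = (Finset.Icc iv jv).card := (Nat.card_Icc _ _).symm
        _ ≤ ((T.filter (fun k : Fin r => iv ≤ (k : ℕ))).image Fin.val).card :=
            Finset.card_le_card hsub
        _ ≤ (T.filter (fun k : Fin r => iv ≤ (k : ℕ))).card := Finset.card_image_le
    have hsplit : s1.card + s2.card = s.card :=
      Finset.card_filter_add_card_filter_not _
    have hTsplit : (T.filter (fun k : Fin r => iv ≤ (k : ℕ))).card
        + (T.filter (fun k : Fin r => (k : ℕ) < iv)).card = T.card := by
      have := Finset.card_filter_add_card_filter_not
        (s := T) (p := fun k => iv ≤ (k : ℕ))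
      simpa [Nat.not_le] using this
    omega
  obtain ⟨f, hfinj, hf⟩ := (Finset.all_card_le_biUnion_card_iff_exists_injective
    (fun x : {x // x ∈ X} => N x.1)).1 hall
  refine (P.indep_iff_transversal hX).2
    ⟨fun y => if h : y ∈ X then f ⟨y, h⟩ else f ⟨x0, hx0⟩, ?_, ?_⟩
  · intro u hu v hv he
    have e1 : (fun y => if h : y ∈ X then f ⟨y, h⟩ else f ⟨x0, hx0⟩) u = f ⟨u, hu⟩ :=
      dif_pos hu
    have e2 : (fun y => if h : y ∈ X then f ⟨y, h⟩ else f ⟨x0, hx0⟩) v = f ⟨v, hv⟩ :=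
      dif_pos hv
    rw [e1, e2] at he
    exact congrArg Subtype.val (hfinj he)
  · intro x hx
    have e1 : (fun y => if h : y ∈ X then f ⟨y, h⟩ else f ⟨x0, hx0⟩) x = f ⟨x, hx⟩ :=
      dif_pos hx
    rw [e1]
    exact (hNmem _ _).1 (hf ⟨x, hx⟩)

lemma dep_iff_viol (P : IntervalPres M n r) {X : Set α} (hX : X ⊆ M.E) :
    M.Dep X ↔ ∃ i j : ℕ, j + 1 - i < (X ∩ P.NA i j).ncard := by
  constructor
  · intro hD
    by_contra h
    push_neg at h
    exact (Matroid.dep_iff.1 hD).1 (P.indep_of_bounds hX fun i j => h i j)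
  · rintro ⟨i, j, h⟩
    exact P.dep_of_viol hX h

end IntervalPres

end LPMAux2
section LPMAux3

open Set

namespace IntervalPres

variable {α : Type*} {M : Matroid α} {n r : ℕ}

lemma circuit_diff_indep {M : Matroid α} {C : Set α} (hC : M.IsCircuit' C) (c : α)
    (hc : c ∈ C) : M.Indep (C \ {c}) := by
  rw [← Matroid.not_dep_iff (diff_subset.trans hC.1.subset_ground)]
  intro hdep
  have heq := hC.2 _ hdep diff_subset
  rw [← heq] at hc
  exact hc.2 rfl

lemma circuit_rep (P : IntervalPres M n r) {C : Set α} (hC : M.IsCircuit' C) :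
    ∃ i j : ℕ, i ≤ j + 1 ∧ C ⊆ P.NA i j ∧ j + 1 - i < C.ncard ∧ C.ncard ≤ j + 2 - i := by
  have hCE : C ⊆ M.E := hC.1.subset_ground
  obtain ⟨i0, j, hv⟩ := (P.dep_iff_viol hCE).1 hC.1
  set i := min i0 (j + 1) with hi
  have hNAsub : P.NA i0 j ⊆ P.NA i j := P.NA_mono (min_le_left _ _) le_rfl
  have hv' : j + 1 - i < (C ∩ P.NA i j).ncard := by
    have hsub : C ∩ P.NA i0 j ⊆ C ∩ P.NA i j := inter_subset_inter_right _ hNAsub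
    have hfin : (C ∩ P.NA i j).Finite :=
      (P.ground_finite.subset hCE).subset inter_subset_left
    have := Set.ncard_le_ncard hsub hfin
    omega
  have hdep : M.Dep (C ∩ P.NA i j) := by
    apply P.dep_of_viol (inter_subset_left.trans hCE)
    rwa [Set.inter_assoc, Set.inter_self]
  have heq : C ∩ P.NA i j = C := hC.2 _ hdep inter_subset_left
  have hCA : C ⊆ P.NA i j := by rw [← heq]; exact inter_subset_right
  rw [heq] at hv'
  refine ⟨i, j, min_le_right _ _, hCA, hv', ?_⟩
  by_contra h
  push_neg at h
  obtain ⟨S, hSsub, hScard⟩ := Set.exists_subset_card_eq (show j + 2 - i ≤ C.ncard by omega)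
  have hSdep : M.Dep S := by
    apply P.dep_of_viol (hSsub.trans hCE)
    rw [Set.inter_eq_self_of_subset_left (hSsub.trans hCA), hScard]
    omega
  have := hC.2 _ hSdep hSsub
  rw [this] at hScard
  omega

lemma spread (P : IntervalPres M n r) {C : Set α} {w : α} {i j : ℕ}
    (hC : M.IsCircuit' C) (hCA : C ⊆ P.NA i j) (hlt : j + 1 - i < C.ncard)
    (hw : w ∈ P.NA i j) (hwE : w ∈ M.E) : w ∈ M.closure C := by
  by_cases hwC : w ∈ C
  · exact M.mem_closure_of_mem hwC hC.1.subset_ground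
  obtain ⟨c, hc⟩ := hC.1.nonempty
  have hCfin : C.Finite := P.ground_finite.subset hC.1.subset_ground
  have hIind : M.Indep (C \ {c}) := circuit_diff_indep hC c hc
  have hins : M.Dep (insert w (C \ {c})) := by
    apply P.dep_of_viol (insert_subset hwE (diff_subset.trans hC.1.subset_ground))
    have hsub : insert w (C \ {c}) ⊆ P.NA i j := insert_subset hw (diff_subset.trans hCA)
    rw [Set.inter_eq_self_of_subset_left hsub,
      Set.ncard_insert_of_notMem (fun h => hwC h.1) (hCfin.diff (t := {c})),
      Set.ncard_diff_singleton_of_mem hc]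
    have : 1 ≤ C.ncard := by omega
    omega
  have hwcl : w ∈ M.closure (C \ {c}) := by
    rw [hIind.mem_closure_iff]
    exact Or.inl hins
  exact M.closure_subset_closure diff_subset hwcl

lemma onto_of_card (P : IntervalPres M n r) {I : Set α} {i j : ℕ}
    (hI : M.Indep I) (hIA : I ⊆ P.NA i j) (hij : i ≤ j)
    (hcard : j + 1 - i ≤ I.ncard) :
    j < r ∧ ∀ k : Fin r, i ≤ (k : ℕ) → (k : ℕ) ≤ j → ∃ x ∈ I, x ∈ P.J k := by
  obtain ⟨f, hinj, hmem⟩ := (P.indep_iff_transversal hI.subset_ground).1 hI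
  set T : Set (Fin r) := {k | i ≤ (k : ℕ) ∧ (k : ℕ) ≤ j} with hT
  have hTfin : T.Finite := T.toFinite
  have hsub : f '' I ⊆ T := by
    rintro k ⟨x, hx, rfl⟩
    exact hIA hx _ (hmem x hx)
  have hcard1 : T.ncard ≤ j + 1 - i := by
    calc T.ncard = (Fin.val '' T).ncard :=
          (Set.ncard_image_of_injOn Fin.val_injective.injOn).symm
      _ ≤ (Set.Icc i j).ncard := by
          refine Set.ncard_le_ncard ?_ (Set.finite_Icc i j)
          rintro m ⟨k, hk, rfl⟩
          exact Set.mem_Icc.2 hk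
      _ = j + 1 - i := by rw [← Finset.coe_Icc, Set.ncard_coe_finset, Nat.card_Icc]
  have hcard2 : (f '' I).ncard = I.ncard := Set.ncard_image_of_injOn hinj
  have hcard3 : I.ncard ≤ j + 1 - i := P.indep_ncard_le_of_subset_NA hI hIA
  have heq : f '' I = T := Set.eq_of_subset_of_ncard_le hsub (by omega) hTfin
  have hTcard : T.ncard = j + 1 - i := by
    rw [← heq, hcard2]; omega
  have hTne : T.Nonempty := by
    rw [← Set.ncard_pos hTfin, hTcard]; omega
  obtain ⟨k0, hk0⟩ := hTne
  have hir : i < r := lt_of_le_of_lt hk0.1 k0.2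
  constructor
  · have hub : T.ncard ≤ r - i := by
      calc T.ncard = (Fin.val '' T).ncard :=
            (Set.ncard_image_of_injOn Fin.val_injective.injOn).symm
        _ ≤ (Set.Icc i (r - 1)).ncard := by
            refine Set.ncard_le_ncard ?_ (Set.finite_Icc _ _)
            rintro m ⟨k, hk, rfl⟩
            refine Set.mem_Icc.2 ⟨hk.1, ?_⟩
            have := k.2
            omega
        _ = (r - 1) + 1 - i := by rw [← Finset.coe_Icc, Set.ncard_coe_finset, Nat.card_Icc]
        _ = r - i := by omega
    omega
  · intro k h1 h2
    have hkT : k ∈ T := ⟨h1, h2⟩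
    rw [← heq] at hkT
    obtain ⟨x, hx, rfl⟩ := hkT
    exact ⟨x, hx, hmem x hx⟩

lemma circuit_nonloop (P : IntervalPres M n r) {C : Set α} {x y : α}
    (hC : M.IsCircuit' C) (hx : x ∈ C) (hy : y ∈ C) (hxy : x ≠ y) :
    ∃ k : Fin r, x ∈ P.J k := by
  by_contra h
  push_neg at h
  have hxE : x ∈ M.E := hC.1.subset_ground hx
  have hdep : M.Dep {x} := by
    apply P.dep_of_viol (singleton_subset_iff.2 hxE) (i := 1) (j := 0)
    have hxA : x ∈ P.NA 1 0 := fun k hk => absurd hk (h k)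
    rw [Set.inter_eq_self_of_subset_left (singleton_subset_iff.2 hxA), Set.ncard_singleton]
    omega
  have heq := hC.2 _ hdep (singleton_subset_iff.2 hx)
  rw [← heq] at hy
  exact hxy (hy.symm)

lemma restrict_circuit {M : Matroid α} {F C : Set α} (hFE : F ⊆ M.E)
    (hC : (M ↾ F).IsCircuit' C) : M.IsCircuit' C ∧ C ⊆ F := by
  have h1 := hC.1
  rw [Matroid.restrict_dep_iff] at h1
  have hdep : M.Dep C := Matroid.dep_iff.2 ⟨h1.1, h1.2.trans hFE⟩
  refine ⟨⟨hdep, fun D hD hDC => hC.2 D ?_ hDC⟩, h1.2⟩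
  rw [Matroid.restrict_dep_iff]
  exact ⟨(Matroid.dep_iff.1 hD).1, hDC.trans h1.2⟩

lemma loop_mem_flat {M : Matroid α} {F : Set α} {x : α} (hF : M.IsFlat F)
    (hdep : M.Dep {x}) : x ∈ F := by
  have h1 : x ∈ M.closure ∅ := by
    rw [M.empty_indep.mem_closure_iff]
    left
    simpa using hdep
  have h2 : M.closure (∅ : Set α) ⊆ M.closure F := M.closure_subset_closure (empty_subset F)
  have := h2 h1
  rwa [hF.closure] at this

lemma convex_NA (P : IntervalPres M n r) {i j : ℕ} {px pw py : Fin n}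
    (hxA : P.e px ∈ P.NA i j) (hyA : P.e py ∈ P.NA i j)
    (hxk : ∃ k, P.e px ∈ P.J k) (hyk : ∃ k, P.e py ∈ P.J k)
    (h1 : px < pw) (h2 : pw < py) : P.e pw ∈ P.NA i j := by
  intro k hk
  rw [P.mem_J_iff_s7] at hk
  obtain ⟨kx, hkx⟩ := hxk
  obtain ⟨ky, hky⟩ := hyk
  have hxb := P.mem_J_iff_s7.1 hkx
  have hyb := P.mem_J_iff_s7.1 hky
  have hxkb := hxA kx hkx
  have hykb := hyA ky hky
  constructor
  · by_contra hik
    push_neg at hik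
    have hklt : k < kx := by
      rw [Fin.lt_def]
      omega
    have hxJ : P.e px ∈ P.J k := by
      rw [P.mem_J_iff_s7]
      exact ⟨le_of_lt (lt_of_lt_of_le (P.ha hklt) hxb.1), le_trans (le_of_lt h1) hk.2⟩
    have := (hxA k hxJ).1
    omega
  · by_contra hjk
    push_neg at hjk
    have hklt : ky < k := by
      rw [Fin.lt_def]
      omega
    have hyJ : P.e py ∈ P.J k := by
      rw [P.mem_J_iff_s7]
      exact ⟨le_trans hk.1 (le_of_lt h2), le_of_lt (lt_of_le_of_lt hyb.2 (P.hb hklt))⟩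
    have := (hyA k hyJ).2
    omega

lemma pnc_structure (P : IntervalPres M n r) {F : Set α} (hF : M.PncFlat F)
    (hF2 : ∃ x ∈ F, ∃ y ∈ F, x ≠ y) :
    ∃ i j : ℕ, i ≤ j ∧ j < r ∧ F = P.NA i j ∩ M.E ∧
      (∀ k : Fin r, (i ≤ (k : ℕ) ∧ (k : ℕ) ≤ j) ↔ ∃ x ∈ F, x ∈ P.J k) ∧
      (∀ x ∈ F, ∃ k : Fin r, x ∈ P.J k) := by
  classical
  obtain ⟨hFlat, hFssE, hFdep, hFconn⟩ := hF
  have hFE : F ⊆ M.E := hFssE.subset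
  have hcirc : ∀ x ∈ F, ∀ y ∈ F, x ≠ y → ∃ C, M.IsCircuit' C ∧ C ⊆ F ∧ x ∈ C ∧ y ∈ C := by
    intro x hx y hy hxy
    have hx' : x ∈ (M ↾ F).E := by rwa [Matroid.restrict_ground_eq]
    have hy' : y ∈ (M ↾ F).E := by rwa [Matroid.restrict_ground_eq]
    rcases hFconn.2 hx' hy' with ⟨rfl, -⟩ | ⟨C, hC, hxC, hyC⟩
    · exact absurd rfl hxy
    · obtain ⟨hC', hCF⟩ := restrict_circuit hFE hC
      exact ⟨C, hC', hCF, hxC, hyC⟩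
  have hother : ∀ x ∈ F, ∃ y ∈ F, x ≠ y := by
    intro x hx
    obtain ⟨x1, hx1, x2, hx2, h12⟩ := hF2
    by_cases h : x = x1
    · exact ⟨x2, hx2, h ▸ h12⟩
    · exact ⟨x1, hx1, h⟩
  have hnl : ∀ x ∈ F, ∃ k : Fin r, x ∈ P.J k := by
    intro x hx
    obtain ⟨y, hy, hxy⟩ := hother x hx
    obtain ⟨C, hC, hCF, hxC, hyC⟩ := hcirc x hx y hy hxy
    exact circuit_nonloop P hC hxC hyC hxy
  set S : Finset (Fin r) := Finset.univ.filter (fun k => ∃ x ∈ F, x ∈ P.J k) with hS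
  have hSmem : ∀ k : Fin r, k ∈ S ↔ ∃ x ∈ F, x ∈ P.J k := by intro k; simp [hS]
  have hSne : S.Nonempty := by
    obtain ⟨x1, hx1, -, -, -⟩ := hF2
    obtain ⟨k, hk⟩ := hnl x1 hx1
    exact ⟨k, (hSmem k).2 ⟨x1, hx1, hk⟩⟩
  set kmin := S.min' hSne with hkmin
  set kmax := S.max' hSne with hkmax
  obtain ⟨gl, hglF, hglJ⟩ := (hSmem kmin).1 (S.min'_mem hSne)
  obtain ⟨gr, hgrF, hgrJ⟩ := (hSmem kmax).1 (S.max'_mem hSne)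
  have hCstar : ∃ C, M.IsCircuit' C ∧ C ⊆ F ∧ (∃ u ∈ C, u ∈ P.J kmin) ∧
      (∃ v ∈ C, v ∈ P.J kmax) := by
    by_cases hg : gl = gr
    · subst hg
      obtain ⟨y, hy, hgy⟩ := hother gl hglF
      obtain ⟨C, hC, hCF, h1, h2⟩ := hcirc gl hglF y hy hgy
      exact ⟨C, hC, hCF, ⟨gl, h1, hglJ⟩, ⟨gl, h1, hgrJ⟩⟩
    · obtain ⟨C, hC, hCF, h1, h2⟩ := hcirc gl hglF gr hgrF hg
      exact ⟨C, hC, hCF, ⟨gl, h1, hglJ⟩, ⟨gr, h2, hgrJ⟩⟩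
  obtain ⟨C, hC, hCF, ⟨u, huC, huJ⟩, ⟨v, hvC, hvJ⟩⟩ := hCstar
  obtain ⟨i, j, hij1, hCA, hlt, hle⟩ := circuit_rep P hC
  have hikmin : i ≤ (kmin : ℕ) ∧ (kmin : ℕ) ≤ j := hCA huC kmin huJ
  have hikmax : i ≤ (kmax : ℕ) ∧ (kmax : ℕ) ≤ j := hCA hvC kmax hvJ
  have hijle : i ≤ j := le_trans hikmin.1 hikmin.2
  obtain ⟨c, hc⟩ := hC.1.nonempty
  have hCfin : C.Finite := P.ground_finite.subset hC.1.subset_ground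
  have hIind : M.Indep (C \ {c}) := circuit_diff_indep hC c hc
  have hIA : C \ {c} ⊆ P.NA i j := diff_subset.trans hCA
  have hIcard : j + 1 - i ≤ (C \ {c}).ncard := by
    rw [Set.ncard_diff_singleton_of_mem hc]
    omega
  obtain ⟨hjr, honto⟩ := onto_of_card P hIind hIA hijle hIcard
  have hiff : ∀ k : Fin r, (i ≤ (k : ℕ) ∧ (k : ℕ) ≤ j) ↔ ∃ x ∈ F, x ∈ P.J k := by
    intro k
    constructor
    · rintro ⟨h1, h2⟩
      obtain ⟨x, hx, hxJ⟩ := honto k h1 h2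
      exact ⟨x, hCF hx.1, hxJ⟩
    · intro hk
      have hkS : k ∈ S := (hSmem k).2 hk
      have h1 : kmin ≤ k := S.min'_le k hkS
      have h2 : k ≤ kmax := S.le_max' k hkS
      rw [Fin.le_def] at h1 h2
      exact ⟨le_trans hikmin.1 h1, le_trans h2 hikmax.2⟩
  refine ⟨i, j, hijle, hjr, ?_, hiff, hnl⟩
  apply Set.Subset.antisymm
  · intro x hx
    exact ⟨fun k hk => (hiff k).2 ⟨x, hx, hk⟩, hFE hx⟩
  · rintro w ⟨hwA, hwE⟩
    have hcl := spread P hC hCA hlt hwA hwE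
    have hclF : w ∈ M.closure F := M.closure_subset_closure hCF hcl
    rwa [hFlat.closure] at hclF

end IntervalPres

end LPMAux3
section LPMAux4

open Set

namespace IntervalPres

variable {α : Type*} {M : Matroid α} {n r : ℕ}

lemma main_core (P : IntervalPres M n r) {F G : Set α} {iF jF iG jG : ℕ}
    (hF : M.PncFlat F) (hG : M.PncFlat G)
    (hFeq : F = P.NA iF jF ∩ M.E) (hGeq : G = P.NA iG jG ∩ M.E)
    (hFiff : ∀ k : Fin r, (iF ≤ (k : ℕ) ∧ (k : ℕ) ≤ jF) ↔ ∃ x ∈ F, x ∈ P.J k)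
    (hGiff : ∀ k : Fin r, (iG ≤ (k : ℕ) ∧ (k : ℕ) ≤ jG) ↔ ∃ x ∈ G, x ∈ P.J k)
    (hFnl : ∀ x ∈ F, ∃ k : Fin r, x ∈ P.J k)
    (hFjr : jF < r) (hGjr : jG < r)
    (hFG : (F ∩ G).Nonempty) (hspan : M.Spanning (F ∪ G))
    (hle : iF ≤ iG) {z : α} (hzE : z ∈ M.E) (hzK : z ∉ F ∪ G) : False := by
  classical
  have hFE : F ⊆ M.E := hF.2.1.subset
  have hGE : G ⊆ M.E := hG.2.1.subset
  obtain ⟨p, hpF, hpG⟩ := hFG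
  obtain ⟨kp, hkp⟩ := hFnl p hpF
  have hkpF : iF ≤ (kp : ℕ) ∧ (kp : ℕ) ≤ jF := (hFiff kp).2 ⟨p, hpF, hkp⟩
  have hkpG : iG ≤ (kp : ℕ) ∧ (kp : ℕ) ≤ jG := (hGiff kp).2 ⟨p, hpG, hkp⟩
  have hiGjF : iG ≤ jF := le_trans hkpG.1 hkpF.2
  have hjFjG : jF < jG := by
    by_contra hcon
    push_neg at hcon
    have hGF : G ⊆ F := by
      rw [hFeq, hGeq]
      exact inter_subset_inter_left _ (P.NA_mono hle hcon)
    have hun : F ∪ G = F := union_eq_self_of_subset_right hGF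
    rw [hun] at hspan
    have : F = M.E := by rw [← hF.1.closure, hspan.closure_eq]
    exact hF.2.1.ne this
  obtain ⟨B, hB, hBK⟩ := hspan.exists_isBase_subset
  have hr : 0 < r := kp.pos
  -- an independent set of size r
  set I0 : Set α := Set.range (fun k : Fin r => P.e (P.a k)) with hI0
  have heainj : Function.Injective (fun k : Fin r => P.e (P.a k)) := fun k1 k2 h =>
    P.ha.injective (P.inj h)
  have hI0E : I0 ⊆ M.E := by
    rintro x ⟨k, rfl⟩
    exact P.mem_ground_iff.2 ⟨_, rfl⟩
  have hI0card : I0.ncard = r := by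
    rw [hI0, ← Set.image_univ, Set.ncard_image_of_injective _ heainj, Set.ncard_univ,
      Nat.card_eq_fintype_card, Fintype.card_fin]
  have hI0ind : M.Indep I0 := by
    rw [P.indep_iff_transversal hI0E]
    refine ⟨fun x => if h : ∃ k, P.e (P.a k) = x then h.choose else kp, ?_, ?_⟩
    · rintro u ⟨ku, rfl⟩ v ⟨kv, rfl⟩ he
      have h1 : ∃ k, P.e (P.a k) = P.e (P.a ku) := ⟨ku, rfl⟩
      have h2 : ∃ k, P.e (P.a k) = P.e (P.a kv) := ⟨kv, rfl⟩
      have e1 : (fun x => if h : ∃ k, P.e (P.a k) = x then h.choose else kp)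
          (P.e (P.a ku)) = h1.choose := dif_pos h1
      have e2 : (fun x => if h : ∃ k, P.e (P.a k) = x then h.choose else kp)
          (P.e (P.a kv)) = h2.choose := dif_pos h2
      rw [e1, e2] at he
      have e3 : h1.choose = ku := heainj h1.choose_spec
      have e4 : h2.choose = kv := heainj h2.choose_spec
      rw [e3, e4] at he
      rw [he]
    · rintro x ⟨k, rfl⟩
      have h1 : ∃ k', P.e (P.a k') = P.e (P.a k) := ⟨k, rfl⟩
      have e1 : (fun x => if h : ∃ k', P.e (P.a k') = x then h.choose else kp)
          (P.e (P.a k)) = h1.choose := dif_pos h1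
      rw [e1, heainj h1.choose_spec]
      exact P.mem_J_iff_s7.2 ⟨le_rfl, P.hab k⟩
  have hBA : B ⊆ P.NA 0 (r - 1) := by
    intro x _ k _
    have := k.isLt
    omega
  have hBr : B.ncard = r := by
    have hle1 : B.ncard ≤ (r - 1) + 1 - 0 := P.indep_ncard_le_of_subset_NA hB.indep hBA
    have hge : r ≤ B.ncard := by
      obtain ⟨B0, hB0, hI0B0⟩ := hI0ind.exists_isBase_superset
      have h1 : I0.ncard ≤ B0.ncard :=
        Set.ncard_le_ncard hI0B0 (P.ground_finite.subset hB0.subset_ground)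
      have h2 : B0.ncard = B.ncard := hB0.ncard_eq_ncard_of_isBase hB
      omega
    omega
  have hcover : ∀ k : Fin r, ∃ x ∈ B, x ∈ P.J k := by
    have honto := P.onto_of_card hB.indep hBA (by omega) (by omega)
    intro k
    have := k.isLt
    exact honto.2 k (Nat.zero_le _) (by omega)
  have hiF0 : iF = 0 := by
    set k0 : Fin r := ⟨0, hr⟩ with hk0
    have hk0v : (k0 : ℕ) = 0 := rfl
    obtain ⟨x, hxB, hxJ⟩ := hcover k0
    rcases hBK hxB with hxF | hxG
    · have := ((hFiff k0).2 ⟨x, hxF, hxJ⟩).1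
      omega
    · have := ((hGiff k0).2 ⟨x, hxG, hxJ⟩).1
      omega
  have hjGr : jG = r - 1 := by
    set kl : Fin r := ⟨r - 1, by omega⟩ with hkl
    have hklv : (kl : ℕ) = r - 1 := rfl
    obtain ⟨x, hxB, hxJ⟩ := hcover kl
    rcases hBK hxB with hxF | hxG
    · have := ((hFiff kl).2 ⟨x, hxF, hxJ⟩).2
      omega
    · have := ((hGiff kl).2 ⟨x, hxG, hxJ⟩).2
      omega
  have hzF : z ∉ F := fun h => hzK (Or.inl h)
  have hzG : z ∉ G := fun h => hzK (Or.inr h)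
  obtain ⟨k1, hk1J, hk1b⟩ : ∃ k : Fin r, z ∈ P.J k ∧ ¬(iF ≤ (k : ℕ) ∧ (k : ℕ) ≤ jF) := by
    by_contra h
    push_neg at h
    exact hzF (by rw [hFeq]; exact ⟨fun k hk => h k hk, hzE⟩)
  obtain ⟨k2, hk2J, hk2b⟩ : ∃ k : Fin r, z ∈ P.J k ∧ ¬(iG ≤ (k : ℕ) ∧ (k : ℕ) ≤ jG) := by
    by_contra h
    push_neg at h
    exact hzG (by rw [hGeq]; exact ⟨fun k hk => h k hk, hzE⟩)
  have hk1v : jF < (k1 : ℕ) := by omega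
  have hk2r : (k2 : ℕ) < r := k2.isLt
  have hk2v : (k2 : ℕ) < iG := by omega
  obtain ⟨x, hxF, hxJ⟩ := (hFiff k2).1 ⟨by omega, by omega⟩
  obtain ⟨y, hyG, hyJ⟩ := (hGiff k1).1 ⟨by omega, by
    have := k1.isLt
    omega⟩
  have hxA : x ∈ P.NA iF jF := by
    have := hxF; rw [hFeq] at this; exact this.1
  have hyA : y ∈ P.NA iG jG := by
    have := hyG; rw [hGeq] at this; exact this.1
  have hpAF : p ∈ P.NA iF jF := by
    have := hpF; rw [hFeq] at this; exact this.1
  have hpAG : p ∈ P.NA iG jG := by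
    have := hpG; rw [hGeq] at this; exact this.1
  have hxnJ : x ∉ P.J k1 := fun h => by
    have := (hxA k1 h).2
    omega
  have hynJ : y ∉ P.J k2 := fun h => by
    have := (hyA k2 h).1
    omega
  -- positions
  obtain ⟨px, rfl⟩ := P.mem_ground_iff.1 (hFE hxF)
  obtain ⟨py, rfl⟩ := P.mem_ground_iff.1 (hGE hyG)
  obtain ⟨pz, rfl⟩ := P.mem_ground_iff.1 hzE
  obtain ⟨pp, rfl⟩ := P.mem_ground_iff.1 (hFE hpF)
  have hxJ' := P.mem_J_iff_s7.1 hxJ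
  have hyJ' := P.mem_J_iff_s7.1 hyJ
  have hzJ1 := P.mem_J_iff_s7.1 hk1J
  have hzJ2 := P.mem_J_iff_s7.1 hk2J
  have hk2k1 : k2 < k1 := by
    rw [Fin.lt_def]
    omega
  have hpxz : px < pz := by
    have h2 : P.b k2 < P.b k1 := P.hb hk2k1
    have h4 : px < P.a k1 := by
      by_contra hcon
      push_neg at hcon
      exact hxnJ (P.mem_J_iff_s7.2 ⟨hcon, le_trans hxJ'.2 (le_of_lt h2)⟩)
    exact lt_of_lt_of_le h4 hzJ1.1
  have hpzy : pz < py := by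
    have h2 : P.a k2 < P.a k1 := P.ha hk2k1
    have h4 : P.b k2 < py := by
      by_contra hcon
      push_neg at hcon
      exact hynJ (P.mem_J_iff_s7.2 ⟨le_of_lt (lt_of_lt_of_le h2 hyJ'.1), hcon⟩)
    exact lt_of_le_of_lt hzJ2.2 h4
  rcases le_total pz pp with hc | hc
  · rcases lt_or_eq_of_le hc with hlt | heq2
    · have hzA := P.convex_NA hxA hpAF ⟨k2, hxJ⟩ ⟨kp, hkp⟩ hpxz hlt
      exact hzF (by rw [hFeq]; exact ⟨hzA, hzE⟩)
    · exact hzF (by rw [show pz = pp from heq2]; exact hpF)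
  · rcases lt_or_eq_of_le hc with hlt | heq2
    · have hzA := P.convex_NA hpAG hyA ⟨kp, hkp⟩ ⟨k1, hyJ⟩ hlt hpzy
      exact hzG (by rw [hGeq]; exact ⟨hzA, hzE⟩)
    · exact hzG (by rw [show pz = pp from heq2.symm]; exact hpG)

end IntervalPres

end LPMAux4
section Statements

variable {α : Type*}

theorem pnc_flats_union_spanning
    (M : Matroid α) (hM : IsLPM M) (F G : Set α)
    (hF : M.PncFlat F) (hG : M.PncFlat G) (hFG : (F ∩ G).Nonempty)
    (hspan : M.Spanning (F ∪ G)) : F ∪ G = M.E := by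
  classical
  by_contra hne
  have hFE : F ⊆ M.E := hF.2.1.subset
  have hGE : G ⊆ M.E := hG.2.1.subset
  have hKE : F ∪ G ⊆ M.E := Set.union_subset hFE hGE
  obtain ⟨z, hzE, hzK⟩ := Set.exists_of_ssubset (hKE.ssubset_of_ne hne)
  obtain ⟨n, r, ⟨P⟩⟩ := hM
  have hsingle : ∀ F' G' : Set α, M.PncFlat F' → M.PncFlat G' → M.Spanning (F' ∪ G') →
      (¬ ∃ x ∈ F', ∃ y ∈ F', x ≠ y) → False := by
    intro F' G' hF' hG' hsp hns
    push_neg at hns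
    obtain ⟨x, hx⟩ := hF'.2.2.1.nonempty
    have hFx : F' = {x} := by
      apply Set.Subset.antisymm
      · intro y hy
        exact hns y hy x hx
      · simpa using hx
    have hdepx : M.Dep {x} := hFx ▸ hF'.2.2.1
    have hxG : x ∈ G' := IntervalPres.loop_mem_flat hG'.1 hdepx
    have hunion : F' ∪ G' = G' := by
      rw [hFx]
      exact Set.union_eq_self_of_subset_left (Set.singleton_subset_iff.2 hxG)
    rw [hunion] at hsp
    have hGEq : G' = M.E := by rw [← hG'.1.closure, hsp.closure_eq]
    exact hG'.2.1.ne hGEq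
  by_cases hF2 : ∃ x ∈ F, ∃ y ∈ F, x ≠ y
  swap
  · exact hsingle F G hF hG hspan hF2
  by_cases hG2 : ∃ x ∈ G, ∃ y ∈ G, x ≠ y
  swap
  · exact hsingle G F hG hF (by rwa [Set.union_comm]) hG2
  obtain ⟨iF, jF, hFij, hFjr, hFeq, hFiff, hFnl⟩ := P.pnc_structure hF hF2
  obtain ⟨iG, jG, hGij, hGjr, hGeq, hGiff, hGnl⟩ := P.pnc_structure hG hG2
  rcases le_total iF iG with hle | hle
  · exact P.main_core hF hG hFeq hGeq hFiff hGiff hFnl hFjr hGjr hFG hspan hle hzE hzK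
  · refine P.main_core hG hF hGeq hFeq hGiff hFiff hGnl hGjr hFjr
      (by rwa [Set.inter_comm]) (by rwa [Set.union_comm]) hle hzE ?_
    rwa [Set.union_comm]

end Statements
end
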